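/- Let d ≥ 1, δ ≥ 0 and 1 < p⁻ ≤ p⁺ < ∞. For each ε > 0 there exists a constant c_ε ≥ 1, depending only on ε, d, p⁻, p⁺ and δ, such that for every exponent p ∈ [p⁻, p⁺], all matrices A, B ∈ ℝ^{d×d} and every r ≥ 0: ((φ_p)_{|A^sym|})*(r) ≤ c_ε ((φ_p)_{|B^sym|})*(r) + ε |F_p(A) − F_p(B)|². -/

import Mathlib

open MeasureTheory

/-- The shifted N-function `(φ_p)_a(r) = ∫₀^r (δ+a+s)^{p-2} s ds`. -/
noncomputable def phiShift (δ p a r : ℝ) : ℝ :=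
  ∫ s in (0:ℝ)..r, (δ + a + s) ^ (p - 2) * s

/-- The Fenchel conjugate `ψ*(r) = sup_{s ≥ 0} (r·s − ψ(s))`. -/
noncomputable def fconj (ψ : ℝ → ℝ) (r : ℝ) : ℝ :=
  ⨆ s : NNReal, (r * (s : ℝ) - ψ (s : ℝ))

namespace Stmt11Aux

/-- The integrand of the shifted N-function. -/
noncomputable def fInt (p γ u : ℝ) : ℝ := (γ + u) ^ (p - 2) * u

/-- The shifted N-function, in terms of the total shift `γ = δ + a`. -/
noncomputable def psi (p γ : ℝ) : ℝ → ℝ := fun r => ∫ s in (0:ℝ)..r, fInt p γ s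

lemma phiShift_eq_psi (δ p a : ℝ) : phiShift δ p a = psi p (δ + a) := rfl

lemma fInt_nonneg (p γ : ℝ) (hγ : 0 ≤ γ) {u : ℝ} (hu : 0 ≤ u) : 0 ≤ fInt p γ u :=
  mul_nonneg (Real.rpow_nonneg (by linarith) _) hu

lemma fInt_mono (p γ : ℝ) (hγ : 0 ≤ γ) (hp : 1 ≤ p) {u v : ℝ} (hu : 0 ≤ u) (huv : u ≤ v) :
    fInt p γ u ≤ fInt p γ v := by
  unfold fInt
  rcases le_total 2 p with h2 | h2
  · exact mul_le_mul (Real.rpow_le_rpow (by linarith) (by linarith) (by linarith)) huv hu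
      (Real.rpow_nonneg (by linarith) _)
  · rcases eq_or_lt_of_le hu with h0 | h0
    · rw [← h0, mul_zero]
      exact mul_nonneg (Real.rpow_nonneg (by linarith) _) (hu.trans huv)
    · have hv : 0 < v := lt_of_lt_of_le h0 huv
      have hγu : 0 < γ + u := by linarith
      have hγv : 0 < γ + v := by linarith
      have key : u * (γ + v) ^ (2 - p) ≤ v * (γ + u) ^ (2 - p) := by
        have h1 : 1 ≤ (γ + v) / (γ + u) := (one_le_div hγu).2 (by linarith)
        have hratio : ((γ + v) / (γ + u)) ^ (2 - p) ≤ (γ + v) / (γ + u) := by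
          calc ((γ + v) / (γ + u)) ^ (2 - p) ≤ ((γ + v) / (γ + u)) ^ (1 : ℝ) :=
                Real.rpow_le_rpow_of_exponent_le h1 (by linarith)
            _ = (γ + v) / (γ + u) := Real.rpow_one _
        rw [Real.div_rpow hγv.le hγu.le] at hratio
        have hupow : (0:ℝ) < (γ + u) ^ (2 - p) := Real.rpow_pos_of_pos hγu _
        rw [div_le_div_iff₀ hupow hγu] at hratio
        -- hratio : (γ+v)^(2-p) * (γ+u) ≤ (γ+v) * (γ+u)^(2-p)
        have huv' : u * (γ + v) ≤ v * (γ + u) := by nlinarith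
        nlinarith [Real.rpow_nonneg hγv.le (2 - p), Real.rpow_nonneg hγu.le (2 - p)]
      have e1 : (γ + u) ^ (p - 2) = ((γ + u) ^ (2 - p))⁻¹ := by
        rw [show p - 2 = -(2 - p) by ring, Real.rpow_neg hγu.le]
      have e2 : (γ + v) ^ (p - 2) = ((γ + v) ^ (2 - p))⁻¹ := by
        rw [show p - 2 = -(2 - p) by ring, Real.rpow_neg hγv.le]
      have hupow : (0:ℝ) < (γ + u) ^ (2 - p) := Real.rpow_pos_of_pos hγu _
      have hvpow : (0:ℝ) < (γ + v) ^ (2 - p) := Real.rpow_pos_of_pos hγv _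
      rw [e1, e2, mul_comm _ u, mul_comm _ v, ← div_eq_mul_inv, ← div_eq_mul_inv,
        div_le_div_iff₀ hupow hvpow]
      nlinarith

lemma fInt_contOn (p γ : ℝ) (hγ : 0 ≤ γ) (hp : 1 < p) :
    ContinuousOn (fInt p γ) (Set.Ici 0) := by
  have heq : Set.EqOn (fInt p γ)
      (fun u => (γ + u) ^ (p - 1) - γ * (γ + u) ^ (p - 2)) (Set.Ici 0) := by
    intro u hu
    simp only [Set.mem_Ici] at hu
    unfold fInt
    rcases eq_or_lt_of_le (by linarith : (0:ℝ) ≤ γ + u) with h0 | h0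
    · have hu0 : u = 0 := by linarith
      have hγ0 : γ = 0 := by linarith
      simp [hu0, hγ0, Real.zero_rpow (by linarith : p - 1 ≠ 0)]
    · have h1 : (γ + u) ^ (p - 2) * u = (γ + u) ^ (p - 2) * (γ + u) - (γ + u) ^ (p - 2) * γ := by
        ring
      rw [h1, ← Real.rpow_add_one (ne_of_gt h0), show p - 2 + 1 = p - 1 by ring]
      ring
  have hc : ContinuousOn (fun u : ℝ => (γ + u) ^ (p - 1) - γ * (γ + u) ^ (p - 2))
      (Set.Ici 0) := by
    have hbase : ContinuousOn (fun u : ℝ => γ + u) (Set.Ici 0) :=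
      (continuous_const.add continuous_id).continuousOn
    have h1 : ContinuousOn (fun u : ℝ => (γ + u) ^ (p - 1)) (Set.Ici 0) :=
      hbase.rpow_const (fun x _ => Or.inr (by linarith))
    have h2 : ContinuousOn (fun u : ℝ => γ * (γ + u) ^ (p - 2)) (Set.Ici 0) := by
      rcases eq_or_lt_of_le hγ with h0 | h0
      · simp only [← h0, zero_mul]; exact continuousOn_const
      · exact continuousOn_const.mul (hbase.rpow_const
          (fun x hx => Or.inl (by simp only [Set.mem_Ici] at hx; positivity)))
    exact h1.sub h2
  exact ContinuousOn.congr hc heq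

lemma fInt_intble (p γ : ℝ) (hγ : 0 ≤ γ) (hp : 1 < p) {x y : ℝ} (hx : 0 ≤ x) (hy : 0 ≤ y) :
    IntervalIntegrable (fInt p γ) volume x y := by
  apply ContinuousOn.intervalIntegrable
  apply (fInt_contOn p γ hγ hp).mono
  intro u hu
  rcases Set.mem_uIcc.1 hu with h | h
  · exact le_trans hx h.1
  · exact le_trans hy h.1

end Stmt11Aux

namespace Stmt11Aux

section PsiLemmas

variable {p γ : ℝ} (hγ : 0 ≤ γ) (hp : 1 < p)
include hγ hp

lemma psi_nonneg {r : ℝ} (hr : 0 ≤ r) : 0 ≤ psi p γ r :=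
  intervalIntegral.integral_nonneg hr (fun u hu => fInt_nonneg p γ hγ hu.1)

lemma psi_le {s : ℝ} (hs : 0 ≤ s) : psi p γ s ≤ fInt p γ s * s := by
  have h : psi p γ s ≤ ∫ _ in (0:ℝ)..s, fInt p γ s :=
    intervalIntegral.integral_mono_on hs (fInt_intble p γ hγ hp le_rfl hs)
      intervalIntegrable_const (fun u hu => fInt_mono p γ hγ hp.le hu.1 hu.2)
  rw [intervalIntegral.integral_const, smul_eq_mul] at h
  calc psi p γ s ≤ (s - 0) * fInt p γ s := h
    _ = fInt p γ s * s := by ring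

lemma psi_split {x y : ℝ} (hx : 0 ≤ x) (hxy : x ≤ y) :
    psi p γ y = psi p γ x + ∫ u in x..y, fInt p γ u :=
  (intervalIntegral.integral_add_adjacent_intervals
    (fInt_intble p γ hγ hp le_rfl hx) (fInt_intble p γ hγ hp hx (hx.trans hxy))).symm

lemma psi_tail {x y : ℝ} (hx : 0 ≤ x) (hxy : x ≤ y) :
    psi p γ x + (y - x) * fInt p γ x ≤ psi p γ y := by
  rw [psi_split hγ hp hx hxy]
  have h : (∫ _ in x..y, fInt p γ x) ≤ ∫ u in x..y, fInt p γ u :=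
    intervalIntegral.integral_mono_on hxy intervalIntegrable_const
      (fInt_intble p γ hγ hp hx (hx.trans hxy))
      (fun u hu => fInt_mono p γ hγ hp.le hx hu.1)
  rw [intervalIntegral.integral_const, smul_eq_mul] at h
  linarith

lemma psi_lower {t : ℝ} (ht : 0 ≤ t) : t * fInt p γ t ≤ psi p γ (2 * t) := by
  have h := psi_tail hγ hp ht (by linarith : t ≤ 2 * t)
  have h0 := psi_nonneg hγ hp ht
  have : (2 * t - t) * fInt p γ t = t * fInt p γ t := by ring
  linarith

lemma psi_zero : psi p γ 0 = 0 := intervalIntegral.integral_same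

end PsiLemmas

/-- pointwise bound: if `2r ≤ fInt p γ t` then every term in the conjugate sup is `≤ 2rt`. -/
lemma conj_pointwise {p γ r t : ℝ} (hγ : 0 ≤ γ) (hp : 1 < p) (hr : 0 ≤ r) (ht : 0 ≤ t)
    (hcond : 2 * r ≤ fInt p γ t) :
    ∀ s : ℝ, 0 ≤ s → r * s - psi p γ s ≤ 2 * r * t := by
  intro s hs
  rcases le_total s (2 * t) with hle | hge
  · have h1 : r * s ≤ r * (2 * t) := mul_le_mul_of_nonneg_left hle hr
    have h2 := psi_nonneg hγ hp hs
    linarith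
  · have h2t : (0:ℝ) ≤ 2 * t := by linarith
    have hψ2t : r * (2 * t) ≤ psi p γ (2 * t) := by
      have h1 := psi_lower hγ hp ht
      nlinarith
    have htail := psi_tail hγ hp h2t hge
    have hf : r ≤ fInt p γ (2 * t) := by
      have := fInt_mono p γ hγ hp.le ht (by linarith : t ≤ 2 * t)
      linarith
    have hrs : r * s ≤ psi p γ s := by nlinarith
    nlinarith

lemma fconj_le {p γ r t : ℝ} (hγ : 0 ≤ γ) (hp : 1 < p) (hr : 0 ≤ r) (ht : 0 ≤ t)
    (hcond : 2 * r ≤ fInt p γ t) :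
    fconj (psi p γ) r ≤ 2 * r * t :=
  ciSup_le (fun s => conj_pointwise hγ hp hr ht hcond s s.coe_nonneg)

lemma fconj_bdd {p γ r t : ℝ} (hγ : 0 ≤ γ) (hp : 1 < p) (hr : 0 ≤ r) (ht : 0 ≤ t)
    (hcond : 2 * r ≤ fInt p γ t) :
    BddAbove (Set.range fun s : NNReal => r * (s : ℝ) - psi p γ s) := by
  refine ⟨2 * r * t, ?_⟩
  rintro x ⟨s, rfl⟩
  exact conj_pointwise hγ hp hr ht hcond s s.coe_nonneg

lemma fconj_ge {p γ r : ℝ}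
    (hbdd : BddAbove (Set.range fun s : NNReal => r * (s : ℝ) - psi p γ s))
    {s : ℝ} (hs : 0 ≤ s) :
    r * s - psi p γ s ≤ fconj (psi p γ) r := by
  have := le_ciSup hbdd (⟨s, hs⟩ : NNReal)
  exact this

lemma fconj_nonneg {p γ r : ℝ} (hγ : 0 ≤ γ) (hp : 1 < p)
    (hbdd : BddAbove (Set.range fun s : NNReal => r * (s : ℝ) - psi p γ s)) :
    0 ≤ fconj (psi p γ) r := by
  have := fconj_ge (p := p) (γ := γ) (r := r) hbdd le_rfl
  rw [psi_zero hγ hp] at this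
  simpa using this

end Stmt11Aux

namespace Stmt11Aux

section Steps

lemma hp_one {pm p : ℝ} (hpm : 1 < pm) (hp1 : pm ≤ p) : 1 < p := lt_of_lt_of_le hpm hp1

/-- In the regime `γ^(p-1) ≤ r`, the choice `t = M r^(1/(p-1))` satisfies `2r ≤ f(t)`. -/
lemma condA1 {pm p γ r : ℝ} (hpm : 1 < pm) (hp1 : pm ≤ p)
    (hγ : 0 ≤ γ) (hr : 0 < r) (hreg : γ ^ (p - 1) ≤ r)
    {M : ℝ} (hM2 : 2 ≤ M) (hM4 : 4 ≤ M ^ (pm - 1)) :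
    2 * r ≤ fInt p γ (M * r ^ (1 / (p - 1))) := by
  have hp' : 1 < p := hp_one hpm hp1
  have hpne : p - 1 ≠ 0 := sub_ne_zero.2 (by linarith)
  set q : ℝ := 1 / (p - 1) with hq_def
  have hq : 0 < q := by rw [hq_def]; exact one_div_pos.2 (by linarith)
  have hrq : 0 < r ^ q := Real.rpow_pos_of_pos hr _
  have ht : 0 < M * r ^ q := by positivity
  have hqp : q * (p - 1) = 1 := by rw [hq_def]; field_simp
  have hrqp : (r ^ q) ^ (p - 1) = r := by
    rw [← Real.rpow_mul hr.le, hqp, Real.rpow_one]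
  unfold fInt
  rcases le_total 2 p with h2 | h2
  · -- p ≥ 2
    have h1 : (M * r ^ q) ^ (p - 2) ≤ (γ + M * r ^ q) ^ (p - 2) :=
      Real.rpow_le_rpow ht.le (by linarith) (by linarith)
    have h3 : (M * r ^ q) ^ (p - 2) * (M * r ^ q) = (M * r ^ q) ^ (p - 1) := by
      rw [← Real.rpow_add_one ht.ne' (p - 2)]; congr 1; ring
    have h4 : (M * r ^ q) ^ (p - 1) = M ^ (p - 1) * r := by
      rw [Real.mul_rpow (by linarith) hrq.le, hrqp]
    have h5 : (2:ℝ) ≤ M ^ (p - 1) := by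
      calc (2:ℝ) ≤ M := hM2
        _ = M ^ (1:ℝ) := (Real.rpow_one M).symm
        _ ≤ M ^ (p - 1) := Real.rpow_le_rpow_of_exponent_le (by linarith) (by linarith)
    calc 2 * r ≤ M ^ (p - 1) * r := by nlinarith
      _ = (M * r ^ q) ^ (p - 2) * (M * r ^ q) := by rw [h3, h4]
      _ ≤ (γ + M * r ^ q) ^ (p - 2) * (M * r ^ q) := by
          exact mul_le_mul_of_nonneg_right h1 ht.le
  · -- p ≤ 2
    have hγle : γ ≤ r ^ q := by
      have h := Real.rpow_le_rpow (Real.rpow_nonneg hγ _) hreg hq.le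
      rwa [← Real.rpow_mul hγ, mul_comm (p-1) q, hqp, Real.rpow_one] at h
    have ht2 : γ + M * r ^ q ≤ 2 * M * r ^ q := by nlinarith
    have hγt : 0 < γ + M * r ^ q := by positivity
    have hpow : (2 * M * r ^ q) ^ (p - 2) ≤ (γ + M * r ^ q) ^ (p - 2) :=
      Real.rpow_le_rpow_of_nonpos hγt ht2 (by linarith)
    have h2M : (0:ℝ) < 2 * M := by linarith
    have e1 : (2 * M * r ^ q) ^ (p - 2) = (2 * M) ^ (p - 2) * (r ^ q) ^ (p - 2) :=
      Real.mul_rpow h2M.le hrq.le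
    have e2 : (r ^ q) ^ (p - 2) * (r ^ q) = (r ^ q) ^ (p - 1) := by
      rw [← Real.rpow_add_one hrq.ne' (p - 2)]; congr 1; ring
    have e3 : (2 * M) ^ (pm - 2) ≤ (2 * M) ^ (p - 2) :=
      Real.rpow_le_rpow_of_exponent_le (by linarith) (by linarith)
    have e4 : (2 * M) ^ (pm - 2) = 2 ^ (pm - 2) * M ^ (pm - 2) :=
      Real.mul_rpow (by norm_num) (by linarith)
    have e5 : (2:ℝ) ^ (-1 : ℝ) ≤ 2 ^ (pm - 2) :=
      Real.rpow_le_rpow_of_exponent_le (by norm_num) (by linarith)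
    have e5' : (2:ℝ) ^ (-1 : ℝ) = 1/2 := by
      rw [Real.rpow_neg_one]; norm_num
    have e6 : M ^ (pm - 2) * M = M ^ (pm - 1) := by
      rw [← Real.rpow_add_one (by positivity : M ≠ 0) (pm - 2)]; congr 1; ring
    have hM0 : (0:ℝ) < M := by linarith
    have hMpm2 : (0:ℝ) < M ^ (pm - 2) := Real.rpow_pos_of_pos hM0 _
    have e5'' : (1:ℝ)/2 ≤ 2 ^ (pm - 2) := by rw [← e5']; exact e5
    have key : 2 ≤ (2 * M) ^ (p - 2) * M := by
      have h6 : (1/2) * (M ^ (pm - 2) * M) ≤ 2 ^ (pm - 2) * (M ^ (pm - 2) * M) :=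
        mul_le_mul_of_nonneg_right e5'' (mul_nonneg hMpm2.le hM0.le)
      have h7 : (1/2) * M ^ (pm - 1) ≤ (2 * M) ^ (pm - 2) * M := by
        rw [e4, ← e6]; nlinarith
      nlinarith [mul_le_mul_of_nonneg_right e3 hM0.le]
    have efin : (2 * M * r ^ q) ^ (p - 2) * (M * r ^ q) = ((2 * M) ^ (p - 2) * M) * r := by
      rw [e1]
      calc (2*M)^(p-2) * (r^q)^(p-2) * (M * r^q)
          = ((2*M)^(p-2) * M) * ((r ^ q)^(p-2) * (r ^ q)) := by ring
        _ = ((2*M)^(p-2) * M) * r := by rw [e2, hrqp]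
    calc 2 * r ≤ ((2 * M) ^ (p - 2) * M) * r := by nlinarith
      _ = (2 * M * r ^ q) ^ (p - 2) * (M * r ^ q) := efin.symm
      _ ≤ (γ + M * r ^ q) ^ (p - 2) * (M * r ^ q) :=
          mul_le_mul_of_nonneg_right hpow ht.le


/-- In the regime `r ≤ γ^(p-1)`, the choice `t = M r γ^(2-p)` satisfies `2r ≤ f(t)`. -/
lemma condA2 {pm p γ r : ℝ} (hpm : 1 < pm) (hp1 : pm ≤ p)
    (hγ : 0 ≤ γ) (hr : 0 < r) (hreg : r ≤ γ ^ (p - 1))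
    {M : ℝ} (hM2 : 2 ≤ M) (hM4 : 4 ≤ M ^ (pm - 1)) :
    2 * r ≤ fInt p γ (M * (r * γ ^ (2 - p))) := by
  have hp' : 1 < p := hp_one hpm hp1
  have hγ0 : 0 < γ := by
    by_contra h
    push_neg at h
    have : γ = 0 := le_antisymm h hγ
    rw [this, Real.zero_rpow (sub_ne_zero.2 (by linarith))] at hreg
    linarith
  have hγ2p : 0 < γ ^ (2 - p) := Real.rpow_pos_of_pos hγ0 _
  have ht : 0 < M * (r * γ ^ (2 - p)) := by positivity
  have hcancel : γ ^ (p - 2) * γ ^ (2 - p) = 1 := by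
    rw [← Real.rpow_add hγ0]; norm_num
  unfold fInt
  rcases le_total 2 p with h2 | h2
  · -- p ≥ 2
    have h1 : γ ^ (p - 2) ≤ (γ + M * (r * γ ^ (2 - p))) ^ (p - 2) :=
      Real.rpow_le_rpow hγ0.le (by linarith) (by linarith)
    have hγp2 : 0 < γ ^ (p - 2) := Real.rpow_pos_of_pos hγ0 _
    have h3 : γ ^ (p - 2) * (M * (r * γ ^ (2 - p))) = M * r := by
      calc γ ^ (p - 2) * (M * (r * γ ^ (2 - p))) = M * r * (γ ^ (p-2) * γ ^ (2-p)) := by ring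
        _ = M * r := by rw [hcancel]; ring
    calc 2 * r ≤ M * r := by nlinarith
      _ = γ ^ (p - 2) * (M * (r * γ ^ (2 - p))) := h3.symm
      _ ≤ (γ + M * (r * γ ^ (2 - p))) ^ (p - 2) * (M * (r * γ ^ (2 - p))) :=
          mul_le_mul_of_nonneg_right h1 ht.le
  · -- p ≤ 2
    have hrγ : r * γ ^ (2 - p) ≤ γ := by
      have h := mul_le_mul_of_nonneg_right hreg hγ2p.le
      rwa [← Real.rpow_add hγ0, show p - 1 + (2 - p) = 1 by ring, Real.rpow_one] at h
    have ht2 : γ + M * (r * γ ^ (2 - p)) ≤ 2 * M * γ := by nlinarith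
    have hγt : 0 < γ + M * (r * γ ^ (2 - p)) := by positivity
    have hpow : (2 * M * γ) ^ (p - 2) ≤ (γ + M * (r * γ ^ (2 - p))) ^ (p - 2) :=
      Real.rpow_le_rpow_of_nonpos hγt ht2 (by linarith)
    have h2M : (0:ℝ) < 2 * M := by linarith
    have e1 : (2 * M * γ) ^ (p - 2) = (2 * M) ^ (p - 2) * γ ^ (p - 2) :=
      Real.mul_rpow h2M.le hγ0.le
    have e3 : (2 * M) ^ (pm - 2) ≤ (2 * M) ^ (p - 2) :=
      Real.rpow_le_rpow_of_exponent_le (by linarith) (by linarith)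
    have e4 : (2 * M) ^ (pm - 2) = 2 ^ (pm - 2) * M ^ (pm - 2) :=
      Real.mul_rpow (by norm_num) (by linarith)
    have e5 : (2:ℝ) ^ (-1 : ℝ) ≤ 2 ^ (pm - 2) :=
      Real.rpow_le_rpow_of_exponent_le (by norm_num) (by linarith)
    have e5' : (2:ℝ) ^ (-1 : ℝ) = 1/2 := by rw [Real.rpow_neg_one]; norm_num
    have e5'' : (1:ℝ)/2 ≤ 2 ^ (pm - 2) := by rw [← e5']; exact e5
    have hM0 : (0:ℝ) < M := by linarith
    have hMpm2 : (0:ℝ) < M ^ (pm - 2) := Real.rpow_pos_of_pos hM0 _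
    have e6 : M ^ (pm - 2) * M = M ^ (pm - 1) := by
      rw [← Real.rpow_add_one (by positivity : M ≠ 0) (pm - 2)]; congr 1; ring
    have key : 2 ≤ (2 * M) ^ (p - 2) * M := by
      have h6 : (1/2) * (M ^ (pm - 2) * M) ≤ 2 ^ (pm - 2) * (M ^ (pm - 2) * M) :=
        mul_le_mul_of_nonneg_right e5'' (mul_nonneg hMpm2.le hM0.le)
      have h7 : (1/2) * M ^ (pm - 1) ≤ (2 * M) ^ (pm - 2) * M := by
        rw [e4, ← e6]; nlinarith
      nlinarith [mul_le_mul_of_nonneg_right e3 hM0.le]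
    have efin : (2 * M * γ) ^ (p - 2) * (M * (r * γ ^ (2 - p)))
        = ((2 * M) ^ (p - 2) * M) * r := by
      rw [e1]
      calc (2*M)^(p-2) * γ^(p-2) * (M * (r * γ ^ (2-p)))
          = ((2*M)^(p-2) * M) * r * (γ^(p-2) * γ^(2-p)) := by ring
        _ = ((2*M)^(p-2) * M) * r := by rw [hcancel]; ring
    calc 2 * r ≤ ((2 * M) ^ (p - 2) * M) * r := by nlinarith
      _ = (2 * M * γ) ^ (p - 2) * (M * (r * γ ^ (2 - p))) := efin.symm
      _ ≤ (γ + M * (r * γ ^ (2 - p))) ^ (p - 2) * (M * (r * γ ^ (2 - p))) :=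
          mul_le_mul_of_nonneg_right hpow ht.le

/-- In the regime `β^(p-1) ≤ r`, the choice `s = μ r^(1/(p-1))` satisfies `f(s) ≤ r/2`. -/
lemma condB1 {pm pp p β r : ℝ} (hpm : 1 < pm) (hp1 : pm ≤ p) (hp2 : p ≤ pp)
    (hβ : 0 ≤ β) (hr : 0 < r) (hreg : β ^ (p - 1) ≤ r)
    {μ : ℝ} (hμ0 : 0 < μ) (hμa : μ ≤ 2 ^ (-(pp+1))) (hμb : μ ≤ 2 ^ (-(1/(pm-1)))) :
    fInt p β (μ * r ^ (1 / (p - 1))) ≤ r / 2 := by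
  have hp' : 1 < p := hp_one hpm hp1
  have hpne : p - 1 ≠ 0 := sub_ne_zero.2 (by linarith)
  set q : ℝ := 1 / (p - 1) with hq_def
  have hq : 0 < q := by rw [hq_def]; exact one_div_pos.2 (by linarith)
  have hrq : 0 < r ^ q := Real.rpow_pos_of_pos hr _
  have hs : 0 < μ * r ^ q := by positivity
  have hqp : q * (p - 1) = 1 := by rw [hq_def]; field_simp
  have hrqp : (r ^ q) ^ (p - 1) = r := by rw [← Real.rpow_mul hr.le, hqp, Real.rpow_one]
  have hμ1 : μ ≤ 1 := by
    have : (2:ℝ) ^ (-(pp+1)) ≤ 2 ^ (0:ℝ) :=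
      Real.rpow_le_rpow_of_exponent_le (by norm_num) (by linarith)
    rw [Real.rpow_zero] at this
    linarith
  have hβle : β ≤ r ^ q := by
    have h := Real.rpow_le_rpow (Real.rpow_nonneg hβ _) hreg hq.le
    rwa [← Real.rpow_mul hβ, mul_comm (p-1) q, hqp, Real.rpow_one] at h
  unfold fInt
  rcases le_total 2 p with h2 | h2
  · -- p ≥ 2
    have hs2 : β + μ * r ^ q ≤ 2 * r ^ q := by nlinarith
    have hpow : (β + μ * r ^ q) ^ (p - 2) ≤ (2 * r ^ q) ^ (p - 2) :=
      Real.rpow_le_rpow (by positivity) hs2 (by linarith)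
    have e1 : (2 * r ^ q) ^ (p - 2) = 2 ^ (p - 2) * (r ^ q) ^ (p - 2) :=
      Real.mul_rpow (by norm_num) hrq.le
    have e2 : (r ^ q) ^ (p - 2) * (r ^ q) = (r ^ q) ^ (p - 1) := by
      rw [← Real.rpow_add_one hrq.ne' (p - 2)]; congr 1; ring
    have e3 : 2 ^ (p - 2) * μ ≤ 2 ^ (p - 2) * 2 ^ (-(pp+1)) :=
      mul_le_mul_of_nonneg_left hμa (Real.rpow_nonneg (by norm_num) _)
    have e4 : (2:ℝ) ^ (p - 2) * 2 ^ (-(pp+1)) = 2 ^ (p - 2 - (pp+1)) := by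
      rw [← Real.rpow_add (by norm_num : (0:ℝ) < 2)]
      ring_nf
    have e5 : (2:ℝ) ^ (p - 2 - (pp+1)) ≤ 2 ^ (-1 : ℝ) :=
      Real.rpow_le_rpow_of_exponent_le (by norm_num) (by linarith)
    have e5' : (2:ℝ) ^ (-1 : ℝ) = 1/2 := by rw [Real.rpow_neg_one]; norm_num
    have key : 2 ^ (p - 2) * μ ≤ 1/2 := by rw [← e5']; linarith [e4 ▸ e3]
    have hfin : (β + μ * r ^ q) ^ (p - 2) * (μ * r ^ q)
        ≤ (2 ^ (p - 2) * μ) * r := by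
      calc (β + μ * r ^ q) ^ (p - 2) * (μ * r ^ q)
          ≤ (2 * r ^ q) ^ (p - 2) * (μ * r ^ q) := mul_le_mul_of_nonneg_right hpow hs.le
        _ = (2 ^ (p - 2) * μ) * ((r ^ q) ^ (p - 2) * (r ^ q)) := by rw [e1]; ring
        _ = (2 ^ (p - 2) * μ) * r := by rw [e2, hrqp]
    have : (2 ^ (p - 2) * μ) * r ≤ (1/2) * r :=
      mul_le_mul_of_nonneg_right key hr.le
    linarith
  · -- p ≤ 2
    have hpow : (β + μ * r ^ q) ^ (p - 2) ≤ (μ * r ^ q) ^ (p - 2) :=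
      Real.rpow_le_rpow_of_nonpos hs (by linarith) (by linarith)
    have e1 : (μ * r ^ q) ^ (p - 2) * (μ * r ^ q) = (μ * r ^ q) ^ (p - 1) := by
      rw [← Real.rpow_add_one hs.ne' (p - 2)]; congr 1; ring
    have e2 : (μ * r ^ q) ^ (p - 1) = μ ^ (p - 1) * r := by
      rw [Real.mul_rpow hμ0.le hrq.le, hrqp]
    have e3 : μ ^ (p - 1) ≤ (2 ^ (-(1/(pm-1)))) ^ (p - 1) :=
      Real.rpow_le_rpow hμ0.le hμb (by linarith)
    have e4 : ((2:ℝ) ^ (-(1/(pm-1)))) ^ (p - 1) = 2 ^ (-(1/(pm-1)) * (p - 1)) :=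
      (Real.rpow_mul (by norm_num) _ _).symm
    have e5 : (2:ℝ) ^ (-(1/(pm-1)) * (p - 1)) ≤ 2 ^ (-1 : ℝ) := by
      apply Real.rpow_le_rpow_of_exponent_le (by norm_num)
      have hpm1 : 0 < pm - 1 := by linarith
      rw [neg_mul, neg_le_neg_iff, one_div, inv_mul_eq_div, le_div_iff₀ hpm1]
      linarith
    have e5' : (2:ℝ) ^ (-1 : ℝ) = 1/2 := by rw [Real.rpow_neg_one]; norm_num
    have key : μ ^ (p - 1) ≤ 1/2 := by rw [← e5']; calc μ ^ (p-1) ≤ _ := e3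
                                                       _ = _ := e4
                                                       _ ≤ _ := e5
    have hfin : (β + μ * r ^ q) ^ (p - 2) * (μ * r ^ q) ≤ μ ^ (p - 1) * r := by
      calc (β + μ * r ^ q) ^ (p - 2) * (μ * r ^ q)
          ≤ (μ * r ^ q) ^ (p - 2) * (μ * r ^ q) := mul_le_mul_of_nonneg_right hpow hs.le
        _ = μ ^ (p - 1) * r := by rw [e1, e2]
    have : μ ^ (p - 1) * r ≤ (1/2) * r := mul_le_mul_of_nonneg_right key hr.le
    linarith

/-- In the regime `r ≤ β^(p-1)` (with `r > 0`), `s = μ r β^(2-p)` satisfies `f(s) ≤ r/2`. -/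
lemma condB2 {pm pp p β r : ℝ} (hpm : 1 < pm) (hp1 : pm ≤ p) (hp2 : p ≤ pp)
    (hβ : 0 ≤ β) (hr : 0 < r) (hreg : r ≤ β ^ (p - 1))
    {μ : ℝ} (hμ0 : 0 < μ) (hμa : μ ≤ 2 ^ (-(pp+1))) :
    fInt p β (μ * (r * β ^ (2 - p))) ≤ r / 2 := by
  have hp' : 1 < p := hp_one hpm hp1
  have hβ0 : 0 < β := by
    by_contra h
    push_neg at h
    have : β = 0 := le_antisymm h hβ
    rw [this, Real.zero_rpow (sub_ne_zero.2 (by linarith))] at hreg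
    linarith
  have hβ2p : 0 < β ^ (2 - p) := Real.rpow_pos_of_pos hβ0 _
  have hs : 0 < μ * (r * β ^ (2 - p)) := by positivity
  have hμ1 : μ ≤ 1/2 := by
    have h1 : (2:ℝ) ^ (-(pp+1)) ≤ 2 ^ (-1 : ℝ) :=
      Real.rpow_le_rpow_of_exponent_le (by norm_num) (by linarith)
    rw [Real.rpow_neg_one] at h1
    have : μ ≤ (2:ℝ)⁻¹ := le_trans hμa h1
    linarith
  have hcancel : β ^ (p - 2) * β ^ (2 - p) = 1 := by
    rw [← Real.rpow_add hβ0]; norm_num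
  have hrβ : r * β ^ (2 - p) ≤ β := by
    have h := mul_le_mul_of_nonneg_right hreg hβ2p.le
    rwa [← Real.rpow_add hβ0, show p - 1 + (2 - p) = 1 by ring, Real.rpow_one] at h
  unfold fInt
  rcases le_total 2 p with h2 | h2
  · -- p ≥ 2
    have hs2 : β + μ * (r * β ^ (2 - p)) ≤ 2 * β := by nlinarith
    have hpow : (β + μ * (r * β ^ (2 - p))) ^ (p - 2) ≤ (2 * β) ^ (p - 2) :=
      Real.rpow_le_rpow (by positivity) hs2 (by linarith)
    have e1 : (2 * β) ^ (p - 2) = 2 ^ (p - 2) * β ^ (p - 2) :=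
      Real.mul_rpow (by norm_num) hβ0.le
    have e3 : 2 ^ (p - 2) * μ ≤ 2 ^ (p - 2) * 2 ^ (-(pp+1)) :=
      mul_le_mul_of_nonneg_left hμa (Real.rpow_nonneg (by norm_num) _)
    have e4 : (2:ℝ) ^ (p - 2) * 2 ^ (-(pp+1)) = 2 ^ (p - 2 - (pp+1)) := by
      rw [← Real.rpow_add (by norm_num : (0:ℝ) < 2)]
      ring_nf
    have e5 : (2:ℝ) ^ (p - 2 - (pp+1)) ≤ 2 ^ (-1 : ℝ) :=
      Real.rpow_le_rpow_of_exponent_le (by norm_num) (by linarith)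
    have e5' : (2:ℝ) ^ (-1 : ℝ) = 1/2 := by rw [Real.rpow_neg_one]; norm_num
    have key : 2 ^ (p - 2) * μ ≤ 1/2 := by rw [← e5']; linarith [e4 ▸ e3]
    have hfin : (β + μ * (r * β ^ (2-p))) ^ (p - 2) * (μ * (r * β ^ (2-p)))
        ≤ (2 ^ (p - 2) * μ) * r := by
      calc (β + μ * (r * β ^ (2-p))) ^ (p - 2) * (μ * (r * β ^ (2-p)))
          ≤ (2 * β) ^ (p - 2) * (μ * (r * β ^ (2-p))) := mul_le_mul_of_nonneg_right hpow hs.le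
        _ = (2 ^ (p - 2) * μ) * r * (β ^ (p-2) * β ^ (2-p)) := by rw [e1]; ring
        _ = (2 ^ (p - 2) * μ) * r := by rw [hcancel]; ring
    have : (2 ^ (p - 2) * μ) * r ≤ (1/2) * r := mul_le_mul_of_nonneg_right key hr.le
    linarith
  · -- p ≤ 2
    have hpow : (β + μ * (r * β ^ (2 - p))) ^ (p - 2) ≤ β ^ (p - 2) :=
      Real.rpow_le_rpow_of_nonpos hβ0 (by nlinarith) (by linarith)
    have hfin : (β + μ * (r * β ^ (2-p))) ^ (p - 2) * (μ * (r * β ^ (2-p))) ≤ μ * r := by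
      calc (β + μ * (r * β ^ (2-p))) ^ (p - 2) * (μ * (r * β ^ (2-p)))
          ≤ β ^ (p - 2) * (μ * (r * β ^ (2-p))) := mul_le_mul_of_nonneg_right hpow hs.le
        _ = μ * r * (β ^ (p-2) * β ^ (2-p)) := by ring
        _ = μ * r := by rw [hcancel]; ring
    nlinarith


/-- Conjugate upper bound, regime `γ^(p-1) ≤ r`. -/
lemma stepA1 {pm p γ r : ℝ} (hpm : 1 < pm) (hp1 : pm ≤ p)
    (hγ : 0 ≤ γ) (hr : 0 < r) (hreg : γ ^ (p - 1) ≤ r)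
    {M : ℝ} (hM2 : 2 ≤ M) (hM4 : 4 ≤ M ^ (pm - 1)) :
    fconj (psi p γ) r ≤ 2 * M * (r * r ^ (1 / (p - 1))) := by
  have hp' : 1 < p := hp_one hpm hp1
  have ht : 0 ≤ M * r ^ (1 / (p - 1)) := by positivity
  calc fconj (psi p γ) r ≤ 2 * r * (M * r ^ (1 / (p - 1))) :=
        fconj_le hγ hp' hr.le ht (condA1 hpm hp1 hγ hr hreg hM2 hM4)
    _ = 2 * M * (r * r ^ (1 / (p - 1))) := by ring

/-- Conjugate upper bound, regime `r ≤ γ^(p-1)`. -/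
lemma stepA2 {pm p γ r : ℝ} (hpm : 1 < pm) (hp1 : pm ≤ p)
    (hγ : 0 ≤ γ) (hr : 0 < r) (hreg : r ≤ γ ^ (p - 1))
    {M : ℝ} (hM2 : 2 ≤ M) (hM4 : 4 ≤ M ^ (pm - 1)) :
    fconj (psi p γ) r ≤ 2 * M * (r * (r * γ ^ (2 - p))) := by
  have hp' : 1 < p := hp_one hpm hp1
  have hγ0 : 0 < γ := by
    by_contra h
    push_neg at h
    have hγ0 : γ = 0 := le_antisymm h hγ
    rw [hγ0, Real.zero_rpow (sub_ne_zero.2 (by linarith))] at hreg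
    linarith
  have ht : 0 ≤ M * (r * γ ^ (2 - p)) := by positivity
  calc fconj (psi p γ) r ≤ 2 * r * (M * (r * γ ^ (2 - p))) :=
        fconj_le hγ hp' hr.le ht (condA2 hpm hp1 hγ hr hreg hM2 hM4)
    _ = 2 * M * (r * (r * γ ^ (2 - p))) := by ring

/-- For `p ≥ 2`, the conjugate is always bounded by the large-`r` expression. -/
lemma stepA_ge2 {pm p γ r : ℝ} (hpm : 1 < pm) (hp1 : pm ≤ p) (h2 : 2 ≤ p)
    (hγ : 0 ≤ γ) (hr : 0 < r)
    {M : ℝ} (hM2 : 2 ≤ M) (hM4 : 4 ≤ M ^ (pm - 1)) :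
    fconj (psi p γ) r ≤ 2 * M * (r * r ^ (1 / (p - 1))) := by
  have hp' : 1 < p := hp_one hpm hp1
  have hpne : p - 1 ≠ 0 := sub_ne_zero.2 (by linarith)
  set q : ℝ := 1 / (p - 1) with hq_def
  have hq : 0 < q := by rw [hq_def]; exact one_div_pos.2 (by linarith)
  rcases le_total (γ ^ (p - 1)) r with hreg | hreg
  · exact stepA1 hpm hp1 hγ hr hreg hM2 hM4
  · have hγ0 : 0 < γ := by
      by_contra h
      push_neg at h
      have hγ0 : γ = 0 := le_antisymm h hγ
      rw [hγ0, Real.zero_rpow (sub_ne_zero.2 (by linarith))] at hreg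
      linarith
    have h := stepA2 hpm hp1 hγ hr hreg hM2 hM4
    -- convert : r * γ^(2-p) ≤ r^q
    have hid : r = r ^ q * r ^ (1 - q) := by
      rw [← Real.rpow_add hr, show q + (1 - q) = 1 by ring, Real.rpow_one]
    have h1q : 0 ≤ 1 - q := by
      have : q ≤ 1 := by rw [hq_def]; rw [div_le_one (by linarith)]; linarith
      linarith
    have hpow : r ^ (1 - q) ≤ γ ^ (p - 2) := by
      have h3 := Real.rpow_le_rpow (le_of_lt hr) hreg h1q
      rwa [← Real.rpow_mul hγ0.le, show (p - 1) * (1 - q) = p - 2 by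
        rw [hq_def]; field_simp; ring] at h3
    have hcancel : γ ^ (p - 2) * γ ^ (2 - p) = 1 := by
      rw [← Real.rpow_add hγ0]; norm_num
    have hγ2p : 0 ≤ γ ^ (2 - p) := Real.rpow_nonneg hγ0.le _
    have hconv : r * γ ^ (2 - p) ≤ r ^ q := by
      calc r * γ ^ (2 - p) = r ^ q * r ^ (1 - q) * γ ^ (2 - p) := by rw [← hid]
        _ ≤ r ^ q * γ ^ (p - 2) * γ ^ (2 - p) := by
            have := mul_le_mul_of_nonneg_left hpow (Real.rpow_nonneg hr.le q)
            exact mul_le_mul_of_nonneg_right this hγ2p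
        _ = r ^ q * (γ ^ (p - 2) * γ ^ (2 - p)) := by ring
        _ = r ^ q := by rw [hcancel, mul_one]
    calc fconj (psi p γ) r ≤ 2 * M * (r * (r * γ ^ (2 - p))) := h
      _ ≤ 2 * M * (r * r ^ q) := by
          have := mul_le_mul_of_nonneg_left hconv hr.le
          nlinarith
    
/-- Upper bound valid for every `r ≥ 0`: gives boundedness of the sup. -/
lemma bddAbove_conj {pm p β r : ℝ} (hpm : 1 < pm) (hp1 : pm ≤ p)
    (hβ : 0 ≤ β) (hr : 0 ≤ r)
    {M : ℝ} (hM2 : 2 ≤ M) (hM4 : 4 ≤ M ^ (pm - 1)) :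
    BddAbove (Set.range fun s : NNReal => r * (s : ℝ) - psi p β s) := by
  have hp' : 1 < p := hp_one hpm hp1
  rcases eq_or_lt_of_le hr with h0 | h0
  · refine fconj_bdd hβ hp' hr le_rfl ?_
    rw [← h0]
    simp [fInt]
  · rcases le_total (β ^ (p - 1)) r with hreg | hreg
    · exact fconj_bdd hβ hp' hr (by positivity)
        (condA1 hpm hp1 hβ h0 hreg hM2 hM4)
    · have hβ0 : 0 < β := by
        by_contra h
        push_neg at h
        have hβ0 : β = 0 := le_antisymm h hβ
        rw [hβ0, Real.zero_rpow (sub_ne_zero.2 (by linarith))] at hreg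
        linarith
      exact fconj_bdd hβ hp' hr (by positivity)
        (condA2 hpm hp1 hβ h0 hreg hM2 hM4)

/-- Conjugate lower bound, regime `β^(p-1) ≤ r`. -/
lemma stepB1 {pm pp p β r : ℝ} (hpm : 1 < pm) (hp1 : pm ≤ p) (hp2 : p ≤ pp)
    (hβ : 0 ≤ β) (hr : 0 < r) (hreg : β ^ (p - 1) ≤ r)
    {M μ : ℝ} (hM2 : 2 ≤ M) (hM4 : 4 ≤ M ^ (pm - 1))
    (hμ0 : 0 < μ) (hμa : μ ≤ 2 ^ (-(pp+1))) (hμb : μ ≤ 2 ^ (-(1/(pm-1)))) :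
    μ/2 * (r * r ^ (1 / (p - 1))) ≤ fconj (psi p β) r := by
  have hp' : 1 < p := hp_one hpm hp1
  set s : ℝ := μ * r ^ (1 / (p - 1)) with hs_def
  have hrq : 0 < r ^ (1 / (p - 1)) := Real.rpow_pos_of_pos hr _
  have hs : 0 < s := by rw [hs_def]; positivity
  have hcond := condB1 hpm hp1 hp2 hβ hr hreg hμ0 hμa hμb
  have hψ : psi p β s ≤ (r / 2) * s := by
    calc psi p β s ≤ fInt p β s * s := psi_le hβ hp' hs.le
      _ ≤ (r / 2) * s := mul_le_mul_of_nonneg_right hcond hs.le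
  have hbdd := bddAbove_conj hpm hp1 hβ hr.le hM2 hM4
  have hge := fconj_ge (p := p) (γ := β) (r := r) hbdd hs.le
  have : r * s - (r/2) * s ≤ fconj (psi p β) r := by linarith
  calc μ/2 * (r * r ^ (1 / (p - 1))) = r * s - (r/2) * s := by rw [hs_def]; ring
    _ ≤ fconj (psi p β) r := this

/-- Conjugate lower bound, regime `r ≤ β^(p-1)`. -/
lemma stepB2 {pm pp p β r : ℝ} (hpm : 1 < pm) (hp1 : pm ≤ p) (hp2 : p ≤ pp)
    (hβ : 0 ≤ β) (hr : 0 < r) (hreg : r ≤ β ^ (p - 1))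
    {M μ : ℝ} (hM2 : 2 ≤ M) (hM4 : 4 ≤ M ^ (pm - 1))
    (hμ0 : 0 < μ) (hμa : μ ≤ 2 ^ (-(pp+1))) :
    μ/2 * (r * (r * β ^ (2 - p))) ≤ fconj (psi p β) r := by
  have hp' : 1 < p := hp_one hpm hp1
  have hβ0 : 0 < β := by
    by_contra h
    push_neg at h
    have hβ0 : β = 0 := le_antisymm h hβ
    rw [hβ0, Real.zero_rpow (sub_ne_zero.2 (by linarith))] at hreg
    linarith
  set s : ℝ := μ * (r * β ^ (2 - p)) with hs_def
  have hβ2p : 0 < β ^ (2 - p) := Real.rpow_pos_of_pos hβ0 _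
  have hs : 0 < s := by rw [hs_def]; positivity
  have hcond := condB2 hpm hp1 hp2 hβ hr hreg hμ0 hμa
  have hψ : psi p β s ≤ (r / 2) * s := by
    calc psi p β s ≤ fInt p β s * s := psi_le hβ hp' hs.le
      _ ≤ (r / 2) * s := mul_le_mul_of_nonneg_right hcond hs.le
  have hbdd := bddAbove_conj hpm hp1 hβ hr.le hM2 hM4
  have hge := fconj_ge (p := p) (γ := β) (r := r) hbdd hs.le
  have : r * s - (r/2) * s ≤ fconj (psi p β) r := by linarith
  calc μ/2 * (r * (r * β ^ (2 - p))) = r * s - (r/2) * s := by rw [hs_def]; ring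
    _ ≤ fconj (psi p β) r := this

/-- Pointwise monotonicity of `psi` in the shift, in the favourable direction. -/
lemma psi_shift_le {p γ β s : ℝ} (hγ : 0 ≤ γ) (hβ : 0 ≤ β) (hp : 1 < p) (hs : 0 ≤ s)
    (hdir : (2 ≤ p ∧ β ≤ γ) ∨ (p ≤ 2 ∧ γ ≤ β)) :
    psi p β s ≤ psi p γ s := by
  apply intervalIntegral.integral_mono_on hs (fInt_intble p β hβ hp le_rfl hs)
    (fInt_intble p γ hγ hp le_rfl hs)
  intro u hu
  obtain ⟨hu0, -⟩ := hu
  unfold fInt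
  rcases hdir with ⟨h2, hle⟩ | ⟨h2, hle⟩
  · exact mul_le_mul_of_nonneg_right
      (Real.rpow_le_rpow (by linarith) (by linarith) (by linarith)) hu0
  · rcases eq_or_lt_of_le hu0 with h0 | h0
    · rw [← h0, mul_zero, mul_zero]
    · exact mul_le_mul_of_nonneg_right
        (Real.rpow_le_rpow_of_nonpos (by linarith) (by linarith) (by linarith)) hu0

/-- Comparison of conjugates in the favourable direction. -/
lemma fconj_shift_le {pm p γ β r : ℝ} (hpm : 1 < pm) (hp1 : pm ≤ p)
    (hγ : 0 ≤ γ) (hβ : 0 ≤ β) (hr : 0 ≤ r)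
    {M : ℝ} (hM2 : 2 ≤ M) (hM4 : 4 ≤ M ^ (pm - 1))
    (hdir : (2 ≤ p ∧ β ≤ γ) ∨ (p ≤ 2 ∧ γ ≤ β)) :
    fconj (psi p γ) r ≤ fconj (psi p β) r := by
  have hp' : 1 < p := hp_one hpm hp1
  have hbdd := bddAbove_conj hpm hp1 hβ hr hM2 hM4
  apply ciSup_le
  intro s
  have h1 : psi p β s ≤ psi p γ s := psi_shift_le hγ hβ hp' s.coe_nonneg hdir
  have h2 := fconj_ge (p := p) (γ := β) (r := r) hbdd s.coe_nonneg
  linarith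


/-- shift comparison for `p ≥ 2` : if `β ≤ 4γ` then `γ^(2-p) ≤ 4^(p-2) β^(2-p)`. -/
lemma shift_comp_ge2 {p β γ : ℝ} (h2 : 2 ≤ p) (hβpos : 0 < β) (hγpos : 0 < γ)
    (hcomp : β ≤ 4 * γ) : γ ^ (2 - p) ≤ 4 ^ (p - 2) * β ^ (2 - p) := by
  have h1 : γ ^ (2 - p) ≤ (β/4) ^ (2 - p) :=
    Real.rpow_le_rpow_of_nonpos (by positivity) (by linarith) (by linarith)
  have h2' : β ^ (2 - p) = 4 ^ (2 - p) * (β/4) ^ (2 - p) := by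
    rw [← Real.mul_rpow (by norm_num) (by positivity)]
    congr 1
    ring
  have h3 : (4:ℝ) ^ (p - 2) * 4 ^ (2 - p) = 1 := by
    rw [← Real.rpow_add (by norm_num : (0:ℝ) < 4)]
    norm_num
  calc γ ^ (2 - p) ≤ (β/4) ^ (2 - p) := h1
    _ = (4 ^ (p - 2) * 4 ^ (2 - p)) * (β/4) ^ (2 - p) := by rw [h3, one_mul]
    _ = 4 ^ (p - 2) * (4 ^ (2 - p) * (β/4) ^ (2 - p)) := by ring
    _ = 4 ^ (p - 2) * β ^ (2 - p) := by rw [← h2']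

/-- shift comparison for `p ≤ 2` : if `γ ≤ 4β` then `γ^(2-p) ≤ 4^(2-p) β^(2-p)`. -/
lemma shift_comp_le2 {p β γ : ℝ} (h2 : p ≤ 2) (hγ : 0 ≤ γ) (hβ : 0 ≤ β)
    (hcomp : γ ≤ 4 * β) : γ ^ (2 - p) ≤ 4 ^ (2 - p) * β ^ (2 - p) := by
  calc γ ^ (2 - p) ≤ (4 * β) ^ (2 - p) := Real.rpow_le_rpow hγ hcomp (by linarith)
    _ = 4 ^ (2 - p) * β ^ (2 - p) := Real.mul_rpow (by norm_num) hβ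

set_option maxHeartbeats 2000000 in
/-- The main scalar inequality. -/
lemma key (pm pp ε : ℝ) (hpm : 1 < pm) (hpmpp : pm ≤ pp) (hε : 0 < ε) :
    ∃ cε : ℝ, 1 ≤ cε ∧ ∀ p : ℝ, pm ≤ p → p ≤ pp → ∀ γ β r D : ℝ,
      0 ≤ γ → 0 ≤ β → 0 ≤ r → 0 ≤ D →
      (2 ≤ p → 4 * γ ≤ β → β ^ p / 4 ≤ D) →
      (p ≤ 2 → 4 * β ≤ γ → γ ^ p / 16 ≤ D) →
      fconj (psi p γ) r ≤ cε * fconj (psi p β) r + ε * D := by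
  -- opaque constants
  obtain ⟨M, hM2, hM4⟩ : ∃ M : ℝ, 2 ≤ M ∧ 4 ≤ M ^ (pm - 1) := by
    refine ⟨max 2 ((4:ℝ) ^ (1/(pm-1))), le_max_left _ _, ?_⟩
    have h1 : (4:ℝ) ^ (1/(pm-1)) ≤ max 2 ((4:ℝ) ^ (1/(pm-1))) := le_max_right _ _
    have h2 : ((4:ℝ) ^ (1/(pm-1))) ^ (pm-1) ≤ (max 2 ((4:ℝ) ^ (1/(pm-1)))) ^ (pm-1) :=
      Real.rpow_le_rpow (Real.rpow_nonneg (by norm_num) _) h1 (by linarith)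
    rwa [← Real.rpow_mul (by norm_num : (0:ℝ) ≤ 4),
      one_div_mul_cancel (sub_ne_zero.2 (by linarith)), Real.rpow_one] at h2
  have hM0 : 0 < M := by linarith
  have hMne : M ≠ 0 := ne_of_gt hM0
  obtain ⟨μ, hμ0, hμa, hμb⟩ :
      ∃ μ : ℝ, 0 < μ ∧ μ ≤ 2 ^ (-(pp+1)) ∧ μ ≤ 2 ^ (-(1/(pm-1))) :=
    ⟨min ((2:ℝ) ^ (-(pp+1))) ((2:ℝ) ^ (-(1/(pm-1)))),
      lt_min (Real.rpow_pos_of_pos (by norm_num) _) (Real.rpow_pos_of_pos (by norm_num) _),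
      min_le_left _ _, min_le_right _ _⟩
  have hμne : μ ≠ 0 := ne_of_gt hμ0
  obtain ⟨lam, hlam0, hlam1, hlamε⟩ :
      ∃ lam : ℝ, 0 < lam ∧ lam ≤ 1 ∧ lam ≤ ε/(32*M) :=
    ⟨min 1 (ε/(32*M)), lt_min one_pos (by positivity), min_le_left _ _, min_le_right _ _⟩
  obtain ⟨K, hK1, hKpm⟩ : ∃ K : ℝ, 1 ≤ K ∧ 1/(pm-1) ≤ K - 1 := by
    refine ⟨1 + 1/(pm-1), ?_, by norm_num⟩
    have h : 0 < 1/(pm-1) := one_div_pos.2 (by linarith)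
    linarith
  have hlamK1 : 1 ≤ lam ^ (-K) := by
    have h := Real.rpow_le_rpow_of_exponent_ge hlam0 hlam1 (by linarith : -K ≤ 0)
    rwa [Real.rpow_zero] at h
  have h4pp1 : (1:ℝ) ≤ 4 ^ pp := by
    have h := Real.rpow_le_rpow_of_exponent_le (by norm_num : (1:ℝ) ≤ 4)
      (by linarith : (0:ℝ) ≤ pp)
    rwa [Real.rpow_zero] at h
  have h4pppos : (0:ℝ) < 4 ^ pp := Real.rpow_pos_of_pos (by norm_num) _
  have hlamKpos : (0:ℝ) < lam ^ (-K) := Real.rpow_pos_of_pos hlam0 _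
  obtain ⟨Cb, hCb0, hCbprop⟩ :
      ∃ Cb : ℝ, 0 < Cb ∧ (4*M/μ) * (4 ^ pp * lam ^ (-K)) ≤ Cb :=
    ⟨(4*M/μ) * (4 ^ pp * lam ^ (-K)), by positivity, le_rfl⟩
  refine ⟨Cb + 1, by linarith, ?_⟩
  intro p hp1 hp2 γ β r D hγ hβ hr hD hD1 hD2
  have hp' : 1 < p := hp_one hpm hp1
  have hpne : p - 1 ≠ 0 := sub_ne_zero.2 (by linarith)
  set q : ℝ := 1 / (p - 1) with hq_def
  have hq : 0 < q := by rw [hq_def]; exact one_div_pos.2 (by linarith)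
  have hqK : q ≤ K - 1 := by
    refine le_trans ?_ hKpm
    rw [hq_def]
    exact one_div_le_one_div_of_le (by linarith) (by linarith)
  -- boundedness and nonnegativity of the right conjugate
  have hbdd := bddAbove_conj hpm hp1 hβ hr hM2 hM4
  have hQ0 : 0 ≤ fconj (psi p β) r := fconj_nonneg hβ hp' hbdd
  have hεD : 0 ≤ ε * D := mul_nonneg hε.le hD
  have hCQ0 : 0 ≤ (Cb + 1) * fconj (psi p β) r := mul_nonneg (by linarith) hQ0
  -- the trivial case r = 0
  rcases eq_or_lt_of_le hr with hr0 | hr0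
  · have hP0 : fconj (psi p γ) r ≤ 0 := by
      apply ciSup_le
      intro s
      have h := psi_nonneg hγ hp' (s.coe_nonneg)
      rw [← hr0]
      simpa using h
    linarith
  -- generic facts for r > 0
  have hrq : 0 < r ^ q := Real.rpow_pos_of_pos hr0 _
  have idq : q * (p - 1) = 1 := by rw [hq_def]; field_simp
  have idq2 : (p - 1) * (q - 1) = 2 - p := by rw [hq_def]; field_simp; ring
  have idr1 : r ^ q = r * r ^ (q - 1) := by
    have h := Real.rpow_add_one (ne_of_gt hr0) (q - 1)
    calc r ^ q = r ^ (q - 1 + 1) := by congr 1; ring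
      _ = r ^ (q - 1) * r := h
      _ = r * r ^ (q - 1) := by ring
  have idβ : (β ^ (p-1)) ^ (q-1) = β ^ (2-p) := by
    rw [← Real.rpow_mul hβ, idq2]
  have idγ : (γ ^ (p-1)) ^ (q-1) = γ ^ (2-p) := by
    rw [← Real.rpow_mul hγ, idq2]
  have hrq10 : 0 ≤ r ^ (q - 1) := Real.rpow_nonneg hr _
  have hβ2p0 : 0 ≤ β ^ (2 - p) := Real.rpow_nonneg hβ _
  have hγ2p0 : 0 ≤ γ ^ (2 - p) := Real.rpow_nonneg hγ _
  -- upper bounds for P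
  have hPA1 : γ ^ (p - 1) ≤ r → fconj (psi p γ) r ≤ 2 * M * (r * r ^ q) := fun hreg =>
    stepA1 hpm hp1 hγ hr0 hreg hM2 hM4
  have hPA2 : r ≤ γ ^ (p - 1) → fconj (psi p γ) r ≤ 2 * M * (r * (r * γ ^ (2 - p))) :=
    fun hreg => stepA2 hpm hp1 hγ hr0 hreg hM2 hM4
  -- lower bounds for Q
  have hQB1 : β ^ (p - 1) ≤ r → μ/2 * (r * r ^ q) ≤ fconj (psi p β) r := fun hreg =>
    stepB1 hpm hp1 hp2 hβ hr0 hreg hM2 hM4 hμ0 hμa hμb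
  have hQB2 : r ≤ β ^ (p - 1) → μ/2 * (r * (r * β ^ (2 - p))) ≤ fconj (psi p β) r :=
    fun hreg => stepB2 hpm hp1 hp2 hβ hr0 hreg hM2 hM4 hμ0 hμa
  -- finishing device for the comparable cases
  have finish1 : ∀ X Qlb : ℝ, fconj (psi p γ) r ≤ (4*M/μ) * X * Qlb →
      X ≤ 4 ^ pp * lam ^ (-K) → 0 ≤ X → Qlb ≤ fconj (psi p β) r → 0 ≤ Qlb →
      fconj (psi p γ) r ≤ (Cb + 1) * fconj (psi p β) r + ε * D := by
    intro X Qlb hP hX hX0 hQl hQl0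
    have hMμ : 0 < 4*M/μ := by positivity
    have h1 : (4*M/μ) * X ≤ Cb :=
      le_trans (mul_le_mul_of_nonneg_left hX hMμ.le) hCbprop
    have h2 : fconj (psi p γ) r ≤ Cb * Qlb :=
      le_trans hP (mul_le_mul_of_nonneg_right h1 hQl0)
    have h3 : Cb * Qlb ≤ Cb * fconj (psi p β) r := mul_le_mul_of_nonneg_left hQl hCb0.le
    have h4 : (Cb + 1) * fconj (psi p β) r = Cb * fconj (psi p β) r + fconj (psi p β) r := by
      ring
    linarith
  -- finishing device for the ε-absorbed cases
  have finish2 : fconj (psi p γ) r ≤ ε * D →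
      fconj (psi p γ) r ≤ (Cb + 1) * fconj (psi p β) r + ε * D := by
    intro h
    linarith
  -- bound for the λ-powers
  have hlamq1 : lam ^ (q - 1) ≤ 4 ^ pp * lam ^ (-K) := by
    have h1 : lam ^ (q - 1) ≤ lam ^ (-K) :=
      Real.rpow_le_rpow_of_exponent_ge hlam0 hlam1 (by linarith : -K ≤ q - 1)
    calc lam ^ (q - 1) ≤ lam ^ (-K) := h1
      _ = 1 * lam ^ (-K) := by ring
      _ ≤ 4 ^ pp * lam ^ (-K) := mul_le_mul_of_nonneg_right h4pp1 hlamKpos.le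
  have hlam1q : lam ^ (1 - q) ≤ 4 ^ pp * lam ^ (-K) := by
    have h1 : lam ^ (1 - q) ≤ lam ^ (-K) :=
      Real.rpow_le_rpow_of_exponent_ge hlam0 hlam1 (by linarith : -K ≤ 1 - q)
    calc lam ^ (1 - q) ≤ lam ^ (-K) := h1
      _ = 1 * lam ^ (-K) := by ring
      _ ≤ 4 ^ pp * lam ^ (-K) := mul_le_mul_of_nonneg_right h4pp1 hlamKpos.le
  have h4le : (4:ℝ) ^ (p - 2) ≤ 4 ^ pp * lam ^ (-K) := by
    calc (4:ℝ) ^ (p - 2) ≤ 4 ^ pp :=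
          Real.rpow_le_rpow_of_exponent_le (by norm_num) (by linarith)
      _ = 4 ^ pp * 1 := by ring
      _ ≤ 4 ^ pp * lam ^ (-K) := mul_le_mul_of_nonneg_left hlamK1 h4pppos.le
  have h4le' : (4:ℝ) ^ (2 - p) ≤ 4 ^ pp * lam ^ (-K) := by
    calc (4:ℝ) ^ (2 - p) ≤ 4 ^ pp :=
          Real.rpow_le_rpow_of_exponent_le (by norm_num) (by linarith)
      _ = 4 ^ pp * 1 := by ring
      _ ≤ 4 ^ pp * lam ^ (-K) := mul_le_mul_of_nonneg_left hlamK1 h4pppos.le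
  have hone : (1:ℝ) ≤ 4 ^ pp * lam ^ (-K) := by
    calc (1:ℝ) = 1 * 1 := by ring
      _ ≤ 4 ^ pp * lam ^ (-K) := mul_le_mul h4pp1 hlamK1 (by norm_num) h4pppos.le
  rcases le_total 2 p with h2 | h2
  · -- ================== CASE p ≥ 2 ==================
    have hq1 : q ≤ 1 := by rw [hq_def, div_le_one (by linarith)]; linarith
    have hPa : fconj (psi p γ) r ≤ 2 * M * (r * r ^ q) :=
      stepA_ge2 hpm hp1 h2 hγ hr0 hM2 hM4
    rcases le_total β γ with hdir | hdir
    · -- favourable direction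
      have hPQ := fconj_shift_le hpm hp1 hγ hβ hr hM2 hM4 (Or.inl ⟨h2, hdir⟩)
      have h5 : 0 ≤ Cb * fconj (psi p β) r := mul_nonneg hCb0.le hQ0
      have h4 : (Cb + 1) * fconj (psi p β) r
          = Cb * fconj (psi p β) r + fconj (psi p β) r := by ring
      linarith
    · rcases le_total β (4*γ) with hcomp | hbad
      · -- comparable shifts : γ ≤ β ≤ 4γ
        rcases le_total r (γ ^ (p - 1)) with hreg1 | hreg1
        · -- r ≤ γ^(p-1) ≤ β^(p-1)
          have hγpos : 0 < γ := by
            by_contra h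
            push_neg at h
            have h0 : γ = 0 := le_antisymm h hγ
            rw [h0, Real.zero_rpow (sub_ne_zero.2 (by linarith))] at hreg1
            linarith
          have hβpos : 0 < β := by linarith
          have hregβ : r ≤ β ^ (p - 1) :=
            le_trans hreg1 (Real.rpow_le_rpow hγ hdir (by linarith))
          have hshift : γ ^ (2 - p) ≤ 4 ^ (p - 2) * β ^ (2 - p) :=
            shift_comp_ge2 h2 hβpos hγpos hcomp
          apply finish1 (4 ^ (p - 2)) (μ/2 * (r * (r * β ^ (2 - p))))
          · calc fconj (psi p γ) r ≤ 2 * M * (r * (r * γ ^ (2 - p))) := hPA2 hreg1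
              _ ≤ 2 * M * (r * (r * (4 ^ (p - 2) * β ^ (2 - p)))) := by
                  apply mul_le_mul_of_nonneg_left _ (by linarith : (0:ℝ) ≤ 2 * M)
                  apply mul_le_mul_of_nonneg_left _ hr
                  · exact mul_le_mul_of_nonneg_left hshift hr
              _ = (4*M/μ) * 4 ^ (p - 2) * (μ/2 * (r * (r * β ^ (2 - p)))) := by
                  field_simp
                  ring
          · exact h4le
          · positivity
          · exact hQB2 hregβ
          · positivity
        · rcases le_total r (β ^ (p - 1)) with hreg2 | hreg2
          · -- γ^(p-1) ≤ r ≤ β^(p-1)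
            have hβpos : 0 < β := by
              by_contra h
              push_neg at h
              have h0 : β = 0 := le_antisymm h hβ
              rw [h0, Real.zero_rpow (sub_ne_zero.2 (by linarith))] at hreg2
              linarith
            have hγpos : 0 < γ := by linarith
            have hγp1pos : 0 < γ ^ (p - 1) := Real.rpow_pos_of_pos hγpos _
            have hshift : γ ^ (2 - p) ≤ 4 ^ (p - 2) * β ^ (2 - p) :=
              shift_comp_ge2 h2 hβpos hγpos hcomp
            have hrq1 : r ^ (q - 1) ≤ γ ^ (2 - p) := by
              have h := Real.rpow_le_rpow_of_nonpos hγp1pos hreg1 (by linarith : q - 1 ≤ 0)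
              rwa [idγ] at h
            apply finish1 (4 ^ (p - 2)) (μ/2 * (r * (r * β ^ (2 - p))))
            · calc fconj (psi p γ) r ≤ 2 * M * (r * r ^ q) := hPa
                _ = 2 * M * (r * (r * r ^ (q - 1))) := by rw [← idr1]
                _ ≤ 2 * M * (r * (r * (4 ^ (p - 2) * β ^ (2 - p)))) := by
                    apply mul_le_mul_of_nonneg_left _ (by linarith : (0:ℝ) ≤ 2 * M)
                    apply mul_le_mul_of_nonneg_left _ hr
                    apply mul_le_mul_of_nonneg_left _ hr
                    exact le_trans hrq1 hshift
                _ = (4*M/μ) * 4 ^ (p - 2) * (μ/2 * (r * (r * β ^ (2 - p)))) := by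
                    field_simp
                    ring
            · exact h4le
            · positivity
            · exact hQB2 hreg2
            · positivity
          · -- β^(p-1) ≤ r
            apply finish1 1 (μ/2 * (r * r ^ q))
            · calc fconj (psi p γ) r ≤ 2 * M * (r * r ^ q) := hPa
                _ = (4*M/μ) * 1 * (μ/2 * (r * r ^ q)) := by field_simp; ring
            · exact hone
            · norm_num
            · exact hQB1 hreg2
            · positivity
      · -- bad case : 4γ ≤ β
        have hD1' : β ^ p / 4 ≤ D := hD1 h2 hbad
        rcases le_total (β ^ (p - 1)) r with hreg | hreg
        · -- large r : conjugates comparable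
          apply finish1 1 (μ/2 * (r * r ^ q))
          · calc fconj (psi p γ) r ≤ 2 * M * (r * r ^ q) := hPa
              _ = (4*M/μ) * 1 * (μ/2 * (r * r ^ q)) := by field_simp; ring
          · exact hone
          · norm_num
          · exact hQB1 hreg
          · positivity
        · have hβpos : 0 < β := by
            by_contra h
            push_neg at h
            have h0 : β = 0 := le_antisymm h hβ
            rw [h0, Real.zero_rpow (sub_ne_zero.2 (by linarith))] at hreg
            linarith
          have hβp1pos : 0 < β ^ (p - 1) := Real.rpow_pos_of_pos hβpos _
          have hβp : β ^ (p-1) * β = β ^ p := by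
            rw [← Real.rpow_add_one (ne_of_gt hβpos) (p-1)]; congr 1; ring
          rcases le_total r (lam * β ^ (p - 1)) with hsm | hlg
          · -- tiny r : absorb in ε D
            apply finish2
            have hβq : (β ^ (p-1)) ^ q = β := by
              rw [← Real.rpow_mul hβ, mul_comm (p-1) q, idq, Real.rpow_one]
            have hrqle : r ^ q ≤ lam ^ q * β := by
              have h := Real.rpow_le_rpow hr hsm hq.le
              rwa [Real.mul_rpow hlam0.le (Real.rpow_nonneg hβ _), hβq] at h
            have hlamq : lam ^ q ≤ 1 := Real.rpow_le_one hlam0.le hlam1 hq.le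
            have hrrq : r * r ^ q ≤ lam * β ^ p := by
              have h1 : r * r ^ q ≤ (lam * β ^ (p-1)) * (lam ^ q * β) :=
                mul_le_mul hsm hrqle (Real.rpow_nonneg hr _) (by positivity)
              have h2' : lam ^ q * β ≤ β := by
                calc lam ^ q * β ≤ 1 * β := mul_le_mul_of_nonneg_right hlamq hβ
                  _ = β := one_mul β
              have h3 : (lam * β ^ (p-1)) * (lam ^ q * β) ≤ (lam * β ^ (p-1)) * β :=
                mul_le_mul_of_nonneg_left h2' (by positivity)
              calc r * r ^ q ≤ (lam * β ^ (p-1)) * (lam ^ q * β) := h1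
                _ ≤ (lam * β ^ (p-1)) * β := h3
                _ = lam * (β ^ (p-1) * β) := by ring
                _ = lam * β ^ p := by rw [hβp]
            have hβppos : 0 < β ^ p := Real.rpow_pos_of_pos hβpos _
            have hstep : fconj (psi p γ) r ≤ 2 * M * (lam * β ^ p) :=
              le_trans hPa (mul_le_mul_of_nonneg_left hrrq (by linarith))
            have hlamstep : 2 * M * (lam * β ^ p) ≤ 2 * M * ((ε/(32*M)) * β ^ p) := by
              apply mul_le_mul_of_nonneg_left _ (by linarith : (0:ℝ) ≤ 2 * M)
              exact mul_le_mul_of_nonneg_right hlamε hβppos.le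
            have hcalc : 2 * M * ((ε/(32*M)) * β ^ p) = (ε/16) * β ^ p := by
              field_simp
              ring
            have hfin : (ε/16) * β ^ p ≤ ε * D := by
              have h1 : (ε/16) * β ^ p ≤ (ε/4) * β ^ p :=
                mul_le_mul_of_nonneg_right (by linarith) hβppos.le
              have h2' : (ε/4) * β ^ p = ε * (β ^ p / 4) := by ring
              have h3 : ε * (β ^ p / 4) ≤ ε * D := mul_le_mul_of_nonneg_left hD1' hε.le
              linarith
            linarith
          · -- intermediate r
            have hlampos' : 0 < lam * β ^ (p - 1) := by positivity
            have hrq1 : r ^ (q - 1) ≤ lam ^ (q-1) * β ^ (2 - p) := by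
              have h := Real.rpow_le_rpow_of_nonpos hlampos' hlg (by linarith : q - 1 ≤ 0)
              rwa [Real.mul_rpow hlam0.le hβp1pos.le, idβ] at h
            apply finish1 (lam ^ (q-1)) (μ/2 * (r * (r * β ^ (2 - p))))
            · calc fconj (psi p γ) r ≤ 2 * M * (r * r ^ q) := hPa
                _ = 2 * M * (r * (r * r ^ (q - 1))) := by rw [← idr1]
                _ ≤ 2 * M * (r * (r * (lam ^ (q-1) * β ^ (2 - p)))) := by
                    apply mul_le_mul_of_nonneg_left _ (by linarith : (0:ℝ) ≤ 2 * M)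
                    apply mul_le_mul_of_nonneg_left _ hr
                    exact mul_le_mul_of_nonneg_left hrq1 hr
                _ = (4*M/μ) * lam ^ (q-1) * (μ/2 * (r * (r * β ^ (2 - p)))) := by
                    field_simp
                    ring
            · exact hlamq1
            · positivity
            · exact hQB2 hreg
            · positivity
  · -- ================== CASE p ≤ 2 ==================
    have hq1' : 1 ≤ q := by
      rw [hq_def, le_div_iff₀ (by linarith)]; linarith
    rcases le_total γ β with hdir | hdir
    · -- favourable direction
      have hPQ := fconj_shift_le hpm hp1 hγ hβ hr hM2 hM4 (Or.inr ⟨h2, hdir⟩)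
      have h5 : 0 ≤ Cb * fconj (psi p β) r := mul_nonneg hCb0.le hQ0
      have h4 : (Cb + 1) * fconj (psi p β) r
          = Cb * fconj (psi p β) r + fconj (psi p β) r := by ring
      linarith
    · rcases le_total γ (4*β) with hcomp | hbad
      · -- comparable shifts : β ≤ γ ≤ 4β
        rcases le_total r (β ^ (p - 1)) with hreg2 | hreg2
        · -- r ≤ β^(p-1) ≤ γ^(p-1)
          have hβpos : 0 < β := by
            by_contra h
            push_neg at h
            have h0 : β = 0 := le_antisymm h hβ
            rw [h0, Real.zero_rpow (sub_ne_zero.2 (by linarith))] at hreg2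
            linarith
          have hregγ : r ≤ γ ^ (p - 1) :=
            le_trans hreg2 (Real.rpow_le_rpow hβ hdir (by linarith))
          have hshift : γ ^ (2 - p) ≤ 4 ^ (2 - p) * β ^ (2 - p) :=
            shift_comp_le2 h2 hγ hβ hcomp
          apply finish1 (4 ^ (2 - p)) (μ/2 * (r * (r * β ^ (2 - p))))
          · calc fconj (psi p γ) r ≤ 2 * M * (r * (r * γ ^ (2 - p))) := hPA2 hregγ
              _ ≤ 2 * M * (r * (r * (4 ^ (2 - p) * β ^ (2 - p)))) := by
                  apply mul_le_mul_of_nonneg_left _ (by linarith : (0:ℝ) ≤ 2 * M)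
                  apply mul_le_mul_of_nonneg_left _ hr
                  exact mul_le_mul_of_nonneg_left hshift hr
              _ = (4*M/μ) * 4 ^ (2 - p) * (μ/2 * (r * (r * β ^ (2 - p)))) := by
                  field_simp
                  ring
          · exact h4le'
          · positivity
          · exact hQB2 hreg2
          · positivity
        · rcases le_total r (γ ^ (p - 1)) with hreg1 | hreg1
          · -- β^(p-1) ≤ r ≤ γ^(p-1)
            have hγpos : 0 < γ := by
              by_contra h
              push_neg at h
              have h0 : γ = 0 := le_antisymm h hγ
              rw [h0, Real.zero_rpow (sub_ne_zero.2 (by linarith))] at hreg1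
              linarith
            have hshift : γ ^ (2 - p) ≤ 4 ^ (2 - p) * β ^ (2 - p) :=
              shift_comp_le2 h2 hγ hβ hcomp
            have hβ2pr : β ^ (2 - p) ≤ r ^ (q - 1) := by
              have h := Real.rpow_le_rpow (Real.rpow_nonneg hβ _) hreg2
                (by linarith : 0 ≤ q - 1)
              rwa [idβ] at h
            apply finish1 (4 ^ (2 - p)) (μ/2 * (r * r ^ q))
            · calc fconj (psi p γ) r ≤ 2 * M * (r * (r * γ ^ (2 - p))) := hPA2 hreg1
                _ ≤ 2 * M * (r * (r * (4 ^ (2 - p) * β ^ (2 - p)))) := by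
                    apply mul_le_mul_of_nonneg_left _ (by linarith : (0:ℝ) ≤ 2 * M)
                    apply mul_le_mul_of_nonneg_left _ hr
                    exact mul_le_mul_of_nonneg_left hshift hr
                _ ≤ 2 * M * (r * (r * (4 ^ (2 - p) * r ^ (q - 1)))) := by
                    apply mul_le_mul_of_nonneg_left _ (by linarith : (0:ℝ) ≤ 2 * M)
                    apply mul_le_mul_of_nonneg_left _ hr
                    apply mul_le_mul_of_nonneg_left _ hr
                    exact mul_le_mul_of_nonneg_left hβ2pr
                      (Real.rpow_nonneg (by norm_num) _)
                _ = (4*M/μ) * 4 ^ (2 - p) * (μ/2 * (r * (r * r ^ (q - 1)))) := by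
                    field_simp
                    ring
                _ = (4*M/μ) * 4 ^ (2 - p) * (μ/2 * (r * r ^ q)) := by rw [← idr1]
            · exact h4le'
            · positivity
            · exact hQB1 hreg2
            · positivity
          · -- γ^(p-1) ≤ r
            apply finish1 1 (μ/2 * (r * r ^ q))
            · calc fconj (psi p γ) r ≤ 2 * M * (r * r ^ q) := hPA1 hreg1
                _ = (4*M/μ) * 1 * (μ/2 * (r * r ^ q)) := by field_simp; ring
            · exact hone
            · norm_num
            · exact hQB1 hreg2
            · positivity
      · -- bad case : 4β ≤ γ
        have hD2' : γ ^ p / 16 ≤ D := hD2 h2 hbad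
        rcases le_total (γ ^ (p - 1)) r with hreg1 | hreg1
        · -- large r
          have hregβ : β ^ (p - 1) ≤ r :=
            le_trans (Real.rpow_le_rpow hβ (by linarith) (by linarith)) hreg1
          apply finish1 1 (μ/2 * (r * r ^ q))
          · calc fconj (psi p γ) r ≤ 2 * M * (r * r ^ q) := hPA1 hreg1
              _ = (4*M/μ) * 1 * (μ/2 * (r * r ^ q)) := by field_simp; ring
          · exact hone
          · norm_num
          · exact hQB1 hregβ
          · positivity
        · have hγpos : 0 < γ := by
            by_contra h
            push_neg at h
            have h0 : γ = 0 := le_antisymm h hγ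
            rw [h0, Real.zero_rpow (sub_ne_zero.2 (by linarith))] at hreg1
            linarith
          have hγp1pos : 0 < γ ^ (p - 1) := Real.rpow_pos_of_pos hγpos _
          rcases le_total r (lam * γ ^ (p - 1)) with hsm | hlg
          · -- tiny r : absorb in ε D
            apply finish2
            have hcan1 : γ ^ (p-1) * γ ^ (2-p) = γ := by
              rw [← Real.rpow_add hγpos]
              norm_num
            have hcan2 : γ ^ (p-1) * γ = γ ^ p := by
              rw [← Real.rpow_add_one (ne_of_gt hγpos) (p-1)]; congr 1; ring
            have hbig : r * (r * γ ^ (2-p)) ≤ (lam * γ ^ (p-1)) * ((lam * γ ^ (p-1)) * γ ^ (2-p)) := by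
              apply mul_le_mul hsm _ (by positivity) (by positivity)
              exact mul_le_mul_of_nonneg_right hsm hγ2p0
            have hbig2 : (lam * γ ^ (p-1)) * ((lam * γ ^ (p-1)) * γ ^ (2-p))
                = lam * lam * γ ^ p := by
              calc (lam * γ ^ (p-1)) * ((lam * γ ^ (p-1)) * γ ^ (2-p))
                  = lam * lam * (γ ^ (p-1) * (γ ^ (p-1) * γ ^ (2-p))) := by ring
                _ = lam * lam * (γ ^ (p-1) * γ) := by rw [hcan1]
                _ = lam * lam * γ ^ p := by rw [hcan2]
            have hγppos : 0 < γ ^ p := Real.rpow_pos_of_pos hγpos _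
            have hlamlam : lam * lam ≤ lam := by
              calc lam * lam ≤ 1 * lam := mul_le_mul_of_nonneg_right hlam1 hlam0.le
                _ = lam := one_mul lam
            have hstep : fconj (psi p γ) r ≤ 2 * M * (lam * γ ^ p) := by
              have h1 := hPA2 hreg1
              have h2' : r * (r * γ ^ (2-p)) ≤ lam * γ ^ p := by
                calc r * (r * γ ^ (2-p)) ≤ lam * lam * γ ^ p := by rw [← hbig2]; exact hbig
                  _ ≤ lam * γ ^ p := mul_le_mul_of_nonneg_right hlamlam hγppos.le
              exact le_trans h1 (mul_le_mul_of_nonneg_left h2' (by linarith))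
            have hlamstep : 2 * M * (lam * γ ^ p) ≤ 2 * M * ((ε/(32*M)) * γ ^ p) := by
              apply mul_le_mul_of_nonneg_left _ (by linarith : (0:ℝ) ≤ 2 * M)
              exact mul_le_mul_of_nonneg_right hlamε hγppos.le
            have hcalc : 2 * M * ((ε/(32*M)) * γ ^ p) = (ε/16) * γ ^ p := by
              field_simp
              ring
            have hfin : (ε/16) * γ ^ p ≤ ε * D := by
              have h2' : (ε/16) * γ ^ p = ε * (γ ^ p / 16) := by ring
              have h3 : ε * (γ ^ p / 16) ≤ ε * D := mul_le_mul_of_nonneg_left hD2' hε.le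
              linarith
            linarith
          · -- intermediate r
            have hshift2 : γ ^ (2-p) ≤ lam ^ (1-q) * r ^ (q-1) := by
              have hγr : γ ^ (p-1) ≤ r / lam := by
                rw [le_div_iff₀ hlam0]
                calc γ ^ (p-1) * lam = lam * γ ^ (p-1) := by ring
                  _ ≤ r := hlg
              have h := Real.rpow_le_rpow hγp1pos.le hγr (by linarith : 0 ≤ q - 1)
              rw [idγ] at h
              have hdivpow : (r / lam) ^ (q-1) = lam ^ (1-q) * r ^ (q-1) := by
                rw [Real.div_rpow hr (le_of_lt hlam0), div_eq_mul_inv,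
                  ← Real.rpow_neg hlam0.le, show -(q-1) = 1-q by ring]
                ring
              rwa [hdivpow] at h
            have hlamq0 : 0 ≤ lam ^ (1-q) := Real.rpow_nonneg hlam0.le _
            have hmid : r * (r * γ ^ (2-p)) ≤ lam ^ (1-q) * (r * (r * r ^ (q-1))) := by
              calc r * (r * γ ^ (2-p)) ≤ r * (r * (lam ^ (1-q) * r ^ (q-1))) := by
                    apply mul_le_mul_of_nonneg_left _ hr
                    exact mul_le_mul_of_nonneg_left hshift2 hr
                _ = lam ^ (1-q) * (r * (r * r ^ (q-1))) := by ring
            have hPmid : fconj (psi p γ) r ≤ 2 * M * (lam ^ (1-q) * (r * r ^ q)) := by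
              have h1 := hPA2 hreg1
              calc fconj (psi p γ) r ≤ 2 * M * (r * (r * γ ^ (2-p))) := h1
                _ ≤ 2 * M * (lam ^ (1-q) * (r * (r * r ^ (q-1)))) :=
                    mul_le_mul_of_nonneg_left hmid (by linarith)
                _ = 2 * M * (lam ^ (1-q) * (r * r ^ q)) := by rw [← idr1]
            rcases le_total (β ^ (p - 1)) r with hregβ | hregβ
            · apply finish1 (lam ^ (1-q)) (μ/2 * (r * r ^ q))
              · calc fconj (psi p γ) r ≤ 2 * M * (lam ^ (1-q) * (r * r ^ q)) := hPmid
                  _ = (4*M/μ) * lam ^ (1-q) * (μ/2 * (r * r ^ q)) := by field_simp; ring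
              · exact hlam1q
              · exact hlamq0
              · exact hQB1 hregβ
              · positivity
            · have hβ2pr' : r ^ (q-1) ≤ β ^ (2-p) := by
                have h := Real.rpow_le_rpow hr hregβ (by linarith : 0 ≤ q - 1)
                rwa [idβ] at h
              apply finish1 (lam ^ (1-q)) (μ/2 * (r * (r * β ^ (2-p))))
              · calc fconj (psi p γ) r ≤ 2 * M * (lam ^ (1-q) * (r * r ^ q)) := hPmid
                  _ = 2 * M * (lam ^ (1-q) * (r * (r * r ^ (q-1)))) := by rw [← idr1]
                  _ ≤ 2 * M * (lam ^ (1-q) * (r * (r * β ^ (2-p)))) := by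
                      apply mul_le_mul_of_nonneg_left _ (by linarith : (0:ℝ) ≤ 2 * M)
                      apply mul_le_mul_of_nonneg_left _ hlamq0
                      apply mul_le_mul_of_nonneg_left _ hr
                      exact mul_le_mul_of_nonneg_left hβ2pr' hr
                  _ = (4*M/μ) * lam ^ (1-q) * (μ/2 * (r * (r * β ^ (2-p)))) := by
                      field_simp
                      ring
              · exact hlam1q
              · exact hlamq0
              · exact hQB2 hregβ
              · positivity

end Steps

end Stmt11Aux

/-- The symmetric part `A^sym := ½(A + Aᵀ)`. -/
noncomputable def msym {d : ℕ} (A : Matrix (Fin d) (Fin d) ℝ) : Matrix (Fin d) (Fin d) ℝ :=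
  (2 : ℝ)⁻¹ • (A + A.transpose)

/-- The Frobenius norm of a matrix. -/
noncomputable def frob {d : ℕ} (A : Matrix (Fin d) (Fin d) ℝ) : ℝ :=
  Real.sqrt (∑ i, ∑ j, (A i j) ^ 2)

/-- `F_p(A) := (δ+|A^sym|)^{(p−2)/2} A^sym`. -/
noncomputable def Fmap {d : ℕ} (δ p : ℝ) (A : Matrix (Fin d) (Fin d) ℝ) :
    Matrix (Fin d) (Fin d) ℝ :=
  ((δ + frob (msym A)) ^ ((p - 2) / 2)) • msym A

namespace Stmt11Aux

/-- Embedding of matrices into Euclidean space. -/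
noncomputable def emb {d : ℕ} (A : Matrix (Fin d) (Fin d) ℝ) :
    EuclideanSpace ℝ (Fin d × Fin d) := WithLp.toLp 2 (fun ij : Fin d × Fin d => A ij.1 ij.2)

lemma frob_eq_norm {d : ℕ} (A : Matrix (Fin d) (Fin d) ℝ) : frob A = ‖emb A‖ := by
  rw [EuclideanSpace.norm_eq]
  unfold frob
  congr 1
  rw [Fintype.sum_prod_type]
  refine Finset.sum_congr rfl fun i _ => Finset.sum_congr rfl fun j _ => ?_
  rw [Real.norm_eq_abs, sq_abs]
  rfl

lemma emb_sub {d : ℕ} (A B : Matrix (Fin d) (Fin d) ℝ) : emb (A - B) = emb A - emb B := by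
  ext ij; simp [emb]

lemma emb_smul {d : ℕ} (c : ℝ) (A : Matrix (Fin d) (Fin d) ℝ) : emb (c • A) = c • emb A := by
  ext ij; simp [emb]

lemma frob_nonneg {d : ℕ} (A : Matrix (Fin d) (Fin d) ℝ) : 0 ≤ frob A := Real.sqrt_nonneg _

lemma frob_smul {d : ℕ} {c : ℝ} (hc : 0 ≤ c) (A : Matrix (Fin d) (Fin d) ℝ) :
    frob (c • A) = c * frob A := by
  rw [frob_eq_norm, frob_eq_norm, emb_smul, norm_smul, Real.norm_eq_abs, abs_of_nonneg hc]

lemma frob_sub_frob_le {d : ℕ} (A B : Matrix (Fin d) (Fin d) ℝ) :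
    |frob A - frob B| ≤ frob (A - B) := by
  rw [frob_eq_norm, frob_eq_norm, frob_eq_norm, emb_sub]
  exact abs_norm_sub_norm_le _ _

lemma frob_Fmap {d : ℕ} (δ p : ℝ) (hδ : 0 ≤ δ) (A : Matrix (Fin d) (Fin d) ℝ) :
    frob (Fmap δ p A) = (δ + frob (msym A)) ^ ((p - 2) / 2) * frob (msym A) := by
  unfold Fmap
  exact frob_smul (Real.rpow_nonneg (by linarith [frob_nonneg (msym A)]) _) _

end Stmt11Aux

namespace Stmt11Aux

lemma four_rpow_half : (4:ℝ) ^ ((1:ℝ)/2) = 2 := by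
  rw [← Real.sqrt_eq_rpow, show (4:ℝ) = 2^2 by norm_num, Real.sqrt_sq (by norm_num : (0:ℝ) ≤ 2)]

/-- bad-case lower bound for `p ≥ 2`. -/
lemma gbound1 {p δ a b : ℝ} (hδ : 0 ≤ δ) (ha : 0 ≤ a) (hb : 0 ≤ b) (hp : 1 < p) (h2 : 2 ≤ p)
    (hbad : 4 * (δ + a) ≤ δ + b) :
    (δ + b) ^ (p/2) / 2 ≤ (δ + b) ^ ((p-2)/2) * b - (δ + a) ^ ((p-2)/2) * a := by
  set γ := δ + a with hγ_def
  set β := δ + b with hβ_def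
  have hγ0 : 0 ≤ γ := by rw [hγ_def]; linarith
  have hβ0 : 0 ≤ β := by rw [hβ_def]; linarith
  rcases eq_or_lt_of_le hβ0 with hβz | hβpos
  · -- β = 0 forces everything to vanish
    have hβz' : β = 0 := hβz.symm
    have hγz : γ = 0 := le_antisymm (by linarith) hγ0
    have hb0 : b = 0 := by rw [hβ_def] at hβz'; linarith
    have ha0 : a = 0 := by rw [hγ_def] at hγz; linarith
    rw [hβz', hγz, hb0, ha0]
    rw [Real.zero_rpow (by positivity : p/2 ≠ 0)]
    simp
  · -- main case
    have hγβ : γ ≤ β / 4 := by linarith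
    have hga : γ ^ ((p-2)/2) * a ≤ β ^ (p/2) / 4 := by
      have h1 : γ ^ ((p-2)/2) * a ≤ γ ^ (p/2) := by
        rcases eq_or_lt_of_le hγ0 with hγz | hγpos
        · rw [← hγz]
          have ha0 : a = 0 := by rw [hγ_def] at hγz; linarith
          rw [ha0, mul_zero]
          exact Real.rpow_nonneg le_rfl _
        · have haγ : a ≤ γ := by rw [hγ_def]; linarith
          calc γ ^ ((p-2)/2) * a ≤ γ ^ ((p-2)/2) * γ :=
                mul_le_mul_of_nonneg_left haγ (Real.rpow_nonneg hγ0 _)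
            _ = γ ^ (p/2) := by
                rw [← Real.rpow_add_one (ne_of_gt hγpos) ((p-2)/2)]
                congr 1; ring
      have h2' : γ ^ (p/2) ≤ (β/4) ^ (p/2) := Real.rpow_le_rpow hγ0 hγβ (by positivity)
      have h3 : ((β:ℝ)/4) ^ (p/2) = β ^ (p/2) / 4 ^ (p/2) := Real.div_rpow hβ0 (by norm_num) _
      have h4 : (4:ℝ) ≤ 4 ^ (p/2) := by
        have h := Real.rpow_le_rpow_of_exponent_le (by norm_num : (1:ℝ) ≤ 4)
          (by linarith : (1:ℝ) ≤ p/2)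
        rwa [Real.rpow_one] at h
      have h5 : β ^ (p/2) / 4 ^ (p/2) ≤ β ^ (p/2) / 4 :=
        div_le_div_of_nonneg_left (Real.rpow_nonneg hβ0 _) (by norm_num) h4
      calc γ ^ ((p-2)/2) * a ≤ γ ^ (p/2) := h1
        _ ≤ (β/4) ^ (p/2) := h2'
        _ = β ^ (p/2) / 4 ^ (p/2) := h3
        _ ≤ β ^ (p/2) / 4 := h5
    have hgb : (3/4) * β ^ (p/2) ≤ β ^ ((p-2)/2) * b := by
      have hbb : (3/4) * β ≤ b := by
        have hδγ : δ ≤ γ := by rw [hγ_def]; linarith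
        have hbβ : b = β - δ := by rw [hβ_def]; ring
        linarith
      have hpow : β ^ ((p-2)/2) * β = β ^ (p/2) := by
        rw [← Real.rpow_add_one (ne_of_gt hβpos) ((p-2)/2)]
        congr 1; ring
      calc (3/4) * β ^ (p/2) = β ^ ((p-2)/2) * ((3/4) * β) := by rw [← hpow]; ring
        _ ≤ β ^ ((p-2)/2) * b :=
            mul_le_mul_of_nonneg_left hbb (Real.rpow_nonneg hβ0 _)
    linarith

/-- bad-case lower bound for `p ≤ 2`. -/
lemma gbound2 {p δ a b : ℝ} (hδ : 0 ≤ δ) (ha : 0 ≤ a) (hb : 0 ≤ b) (hp : 1 < p) (h2 : p ≤ 2)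
    (hbad : 4 * (δ + b) ≤ δ + a) :
    (δ + a) ^ (p/2) / 4 ≤ (δ + a) ^ ((p-2)/2) * a - (δ + b) ^ ((p-2)/2) * b := by
  set γ := δ + a with hγ_def
  set β := δ + b with hβ_def
  have hγ0 : 0 ≤ γ := by rw [hγ_def]; linarith
  have hβ0 : 0 ≤ β := by rw [hβ_def]; linarith
  rcases eq_or_lt_of_le hγ0 with hγz | hγpos
  · have hγz' : γ = 0 := hγz.symm
    have hβz : β = 0 := le_antisymm (by linarith) hβ0
    have hb0 : b = 0 := by rw [hβ_def] at hβz; linarith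
    have ha0 : a = 0 := by rw [hγ_def] at hγz'; linarith
    rw [hβz, hγz', hb0, ha0]
    rw [Real.zero_rpow (by positivity : p/2 ≠ 0)]
    simp
  · have hβγ : β ≤ γ / 4 := by linarith
    have hga : (3/4) * γ ^ (p/2) ≤ γ ^ ((p-2)/2) * a := by
      have haa : (3/4) * γ ≤ a := by
        have hδβ : δ ≤ β := by rw [hβ_def]; linarith
        have haγ : a = γ - δ := by rw [hγ_def]; ring
        linarith
      have hpow : γ ^ ((p-2)/2) * γ = γ ^ (p/2) := by
        rw [← Real.rpow_add_one (ne_of_gt hγpos) ((p-2)/2)]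
        congr 1; ring
      calc (3/4) * γ ^ (p/2) = γ ^ ((p-2)/2) * ((3/4) * γ) := by rw [← hpow]; ring
        _ ≤ γ ^ ((p-2)/2) * a :=
            mul_le_mul_of_nonneg_left haa (Real.rpow_nonneg hγ0 _)
    have hgb : β ^ ((p-2)/2) * b ≤ γ ^ (p/2) / 2 := by
      have h1 : β ^ ((p-2)/2) * b ≤ β ^ (p/2) := by
        rcases eq_or_lt_of_le hβ0 with hβz | hβpos
        · have hb0 : b = 0 := by rw [hβ_def] at hβz; linarith
          rw [hb0, mul_zero]
          exact Real.rpow_nonneg hβ0 _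
        · have hbβ : b ≤ β := by rw [hβ_def]; linarith
          calc β ^ ((p-2)/2) * b ≤ β ^ ((p-2)/2) * β :=
                mul_le_mul_of_nonneg_left hbβ (Real.rpow_nonneg hβ0 _)
            _ = β ^ (p/2) := by
                rw [← Real.rpow_add_one (ne_of_gt hβpos) ((p-2)/2)]
                congr 1; ring
      have h2' : β ^ (p/2) ≤ (γ/4) ^ (p/2) := Real.rpow_le_rpow hβ0 hβγ (by positivity)
      have h3 : ((γ:ℝ)/4) ^ (p/2) = γ ^ (p/2) / 4 ^ (p/2) := Real.div_rpow hγ0 (by norm_num) _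
      have h4 : (2:ℝ) ≤ 4 ^ (p/2) := by
        have h := Real.rpow_le_rpow_of_exponent_le (by norm_num : (1:ℝ) ≤ 4)
          (by linarith : (1:ℝ)/2 ≤ p/2)
        rwa [four_rpow_half] at h
      have h5 : γ ^ (p/2) / 4 ^ (p/2) ≤ γ ^ (p/2) / 2 :=
        div_le_div_of_nonneg_left (Real.rpow_nonneg hγ0 _) (by norm_num) h4
      calc β ^ ((p-2)/2) * b ≤ β ^ (p/2) := h1
        _ ≤ (γ/4) ^ (p/2) := h2'
        _ = γ ^ (p/2) / 4 ^ (p/2) := h3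
        _ ≤ γ ^ (p/2) / 2 := h5
    linarith

end Stmt11Aux

theorem stmt11 (d : ℕ) (hd : 1 ≤ d) (δ pm pp : ℝ) (hδ : 0 ≤ δ) (hpm : 1 < pm)
    (hpmpp : pm ≤ pp) :
    ∀ ε : ℝ, 0 < ε → ∃ cε : ℝ, 1 ≤ cε ∧
      ∀ p : ℝ, pm ≤ p → p ≤ pp → ∀ A B : Matrix (Fin d) (Fin d) ℝ, ∀ r : ℝ, 0 ≤ r →
        fconj (phiShift δ p (frob (msym A))) r ≤
          cε * fconj (phiShift δ p (frob (msym B))) r +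
            ε * frob (Fmap δ p A - Fmap δ p B) ^ 2 := by
  intro ε hε
  obtain ⟨cε, hcε1, hkey⟩ := Stmt11Aux.key pm pp ε hpm hpmpp hε
  refine ⟨cε, hcε1, ?_⟩
  intro p hp1 hp2 A B r hr
  have hp' : 1 < p := lt_of_lt_of_le hpm hp1
  have ha : 0 ≤ frob (msym A) := Stmt11Aux.frob_nonneg _
  have hb : 0 ≤ frob (msym B) := Stmt11Aux.frob_nonneg _
  set a := frob (msym A) with ha_def
  set b := frob (msym B) with hb_def
  set D := frob (Fmap δ p A - Fmap δ p B) ^ 2 with hD_def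
  have hD : 0 ≤ D := by rw [hD_def]; positivity
  have habs : |frob (Fmap δ p A) - frob (Fmap δ p B)| ≤ frob (Fmap δ p A - Fmap δ p B) :=
    Stmt11Aux.frob_sub_frob_le _ _
  have hfa : frob (Fmap δ p A) = (δ + a) ^ ((p-2)/2) * a := Stmt11Aux.frob_Fmap δ p hδ A
  have hfb : frob (Fmap δ p B) = (δ + b) ^ ((p-2)/2) * b := Stmt11Aux.frob_Fmap δ p hδ B
  have hD1 : 2 ≤ p → 4*(δ+a) ≤ (δ+b) → (δ+b)^p/4 ≤ D := by
    intro h2 hbad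
    have hg := Stmt11Aux.gbound1 hδ ha hb hp' h2 hbad
    have hβ0 : 0 ≤ δ + b := by linarith
    have h2' : (δ+b)^((p-2)/2)*b - (δ+a)^((p-2)/2)*a
        ≤ |frob (Fmap δ p A) - frob (Fmap δ p B)| := by
      rw [hfa, hfb, abs_sub_comm]
      exact le_abs_self _
    have h1 : (δ+b)^(p/2)/2 ≤ frob (Fmap δ p A - Fmap δ p B) := by linarith
    have hnn : 0 ≤ (δ+b)^(p/2)/2 := by positivity
    have hsq : ((δ+b)^(p/2)/2)^2 ≤ D := by
      rw [hD_def]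
      exact pow_le_pow_left₀ hnn h1 2
    have hid : ((δ+b)^(p/2)/2)^2 = (δ+b)^p/4 := by
      have hx : ((δ+b)^(p/2))^(2:ℕ) = (δ+b)^p := by
        rw [← Real.rpow_natCast ((δ+b)^(p/2)) 2, ← Real.rpow_mul hβ0]
        congr 1
        push_cast
        ring
      calc ((δ+b)^(p/2)/2)^2 = ((δ+b)^(p/2))^(2:ℕ)/4 := by ring
        _ = (δ+b)^p/4 := by rw [hx]
    linarith
  have hD2 : p ≤ 2 → 4*(δ+b) ≤ (δ+a) → (δ+a)^p/16 ≤ D := by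
    intro h2 hbad
    have hg := Stmt11Aux.gbound2 hδ ha hb hp' h2 hbad
    have hγ0 : 0 ≤ δ + a := by linarith
    have h2' : (δ+a)^((p-2)/2)*a - (δ+b)^((p-2)/2)*b
        ≤ |frob (Fmap δ p A) - frob (Fmap δ p B)| := by
      rw [hfa, hfb]
      exact le_abs_self _
    have h1 : (δ+a)^(p/2)/4 ≤ frob (Fmap δ p A - Fmap δ p B) := by linarith
    have hnn : 0 ≤ (δ+a)^(p/2)/4 := by positivity
    have hsq : ((δ+a)^(p/2)/4)^2 ≤ D := by
      rw [hD_def]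
      exact pow_le_pow_left₀ hnn h1 2
    have hid : ((δ+a)^(p/2)/4)^2 = (δ+a)^p/16 := by
      have hx : ((δ+a)^(p/2))^(2:ℕ) = (δ+a)^p := by
        rw [← Real.rpow_natCast ((δ+a)^(p/2)) 2, ← Real.rpow_mul hγ0]
        congr 1
        push_cast
        ring
      calc ((δ+a)^(p/2)/4)^2 = ((δ+a)^(p/2))^(2:ℕ)/16 := by ring
        _ = (δ+a)^p/16 := by rw [hx]
    linarith
  rw [Stmt11Aux.phiShift_eq_psi δ p a, Stmt11Aux.phiShift_eq_psi δ p b]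
  exact hkey p hp1 hp2 (δ+a) (δ+b) r D (by linarith) (by linarith) hr hD hD1 hD2
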